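/- arXiv:2302.01289 — 3 statements merged into one kernel-verified Lean document; each statement's English description precedes it below -/
import Mathlib

section
/- Let γ > 1 and α = (γ−1)/2, let J ⊆ ℝ be an interval, and suppose a, b, c, k : ℝ × J → ℝ are C¹, 2π-periodic in the first variable θ, and satisfy: (∂_t + b∂_θ)a + a² − b² + α c² = 0; (∂_t + b∂_θ)b + α c ∂_θc + 2ab = (α/(2γ)) c² ∂_θk; (∂_t + b∂_θ)c + α c ∂_θb + γ a c = 0; (∂_t + b∂_θ)k = 0. Then the functions u_r(r,θ,t) := r·a(θ,t), u_θ(r,θ,t) := r·b(θ,t), σ(r,θ,t) := r·c(θ,t), S(r,θ,t) := k(θ,t) solve, for all r > 0, θ ∈ ℝ, t ∈ J, the 2D Euler equations in polar coordinates: (∂_t + u_r∂_r + (1/r)u_θ∂_θ)u_r − (1/r)u_θ² + α σ ∂_rσ = (α/(2γ)) σ² ∂_rS; (∂_t + u_r∂_r + (1/r)u_θ∂_θ)u_θ + (1/r)u_r u_θ + α(σ/r)∂_θσ = (α/(2γ))(σ²/r)∂_θS; (∂_t + u_r∂_r + (1/r)u_θ∂_θ)σ + α σ((1/r)u_r + ∂_ru_r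 + (1/r)∂_θu_θ) = 0; (∂_t + u_r∂_r + (1/r)u_θ∂_θ)S = 0. -/
open Real Set

noncomputable section

/-- Partial derivative in the spatial variable of a function of `(θ, t)`. -/
def pdx (f : ℝ → ℝ → ℝ) (x t : ℝ) : ℝ := deriv (fun y => f y t) x

/-- Partial derivative in the time variable of a function of `(θ, t)`. -/
def pdt (f : ℝ → ℝ → ℝ) (x t : ℝ) : ℝ := deriv (fun s => f x s) t

/-- Partial derivative in the first (radial) variable of a function of `(r, θ, t)`. -/
def d1 (f : ℝ → ℝ → ℝ → ℝ) (r θ t : ℝ) : ℝ := deriv (fun s => f s θ t) r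

/-- Partial derivative in the second (angular) variable. -/
def d2 (f : ℝ → ℝ → ℝ → ℝ) (r θ t : ℝ) : ℝ := deriv (fun s => f r s t) θ

/-- Partial derivative in time. -/
def dt (f : ℝ → ℝ → ℝ → ℝ) (r θ t : ℝ) : ℝ := deriv (fun s => f r θ s) t

/-- The azimuthal-symmetry ansatz `u_r = r a(θ,t)`, `u_θ = r b(θ,t)`,
`σ = r c(θ,t)`, `S = k(θ,t)` turns solutions of the reduced system into solutions of the
2D Euler equations in polar coordinates. -/
theorem azimuthal_ansatz_solves_polar_euler
    (γ α : ℝ) (hγ : 1 < γ) (hα : α = (γ - 1) / 2)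
    (J : Set ℝ) (hJ : J.OrdConnected)
    (a b c k : ℝ → ℝ → ℝ)
    (ha : ContDiffOn ℝ 1 (fun p : ℝ × ℝ => a p.1 p.2) (univ ×ˢ J))
    (hb : ContDiffOn ℝ 1 (fun p : ℝ × ℝ => b p.1 p.2) (univ ×ˢ J))
    (hc : ContDiffOn ℝ 1 (fun p : ℝ × ℝ => c p.1 p.2) (univ ×ˢ J))
    (hk : ContDiffOn ℝ 1 (fun p : ℝ × ℝ => k p.1 p.2) (univ ×ˢ J))
    (hapera : ∀ θ t : ℝ, a (θ + 2 * π) t = a θ t)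
    (hbper : ∀ θ t : ℝ, b (θ + 2 * π) t = b θ t)
    (hcper : ∀ θ t : ℝ, c (θ + 2 * π) t = c θ t)
    (hkper : ∀ θ t : ℝ, k (θ + 2 * π) t = k θ t)
    -- the reduced azimuthal system
    (heq1 : ∀ θ : ℝ, ∀ t ∈ J,
      pdt a θ t + b θ t * pdx a θ t + a θ t ^ 2 - b θ t ^ 2 + α * c θ t ^ 2 = 0)
    (heq2 : ∀ θ : ℝ, ∀ t ∈ J,
      pdt b θ t + b θ t * pdx b θ t + α * c θ t * pdx c θ t + 2 * a θ t * b θ t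
        = α / (2 * γ) * c θ t ^ 2 * pdx k θ t)
    (heq3 : ∀ θ : ℝ, ∀ t ∈ J,
      pdt c θ t + b θ t * pdx c θ t + α * c θ t * pdx b θ t + γ * a θ t * c θ t = 0)
    (heq4 : ∀ θ : ℝ, ∀ t ∈ J, pdt k θ t + b θ t * pdx k θ t = 0)
    -- the azimuthal-symmetry fields
    (ur uθ σ S : ℝ → ℝ → ℝ → ℝ)
    (hur : ∀ r θ t : ℝ, ur r θ t = r * a θ t)
    (huθ : ∀ r θ t : ℝ, uθ r θ t = r * b θ t)
    (hσ : ∀ r θ t : ℝ, σ r θ t = r * c θ t)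
    (hS : ∀ r θ t : ℝ, S r θ t = k θ t) :
    ∀ r θ : ℝ, 0 < r → ∀ t ∈ J,
      (dt ur r θ t + ur r θ t * d1 ur r θ t + 1 / r * uθ r θ t * d2 ur r θ t
          - 1 / r * uθ r θ t ^ 2 + α * σ r θ t * d1 σ r θ t
        = α / (2 * γ) * σ r θ t ^ 2 * d1 S r θ t) ∧
      (dt uθ r θ t + ur r θ t * d1 uθ r θ t + 1 / r * uθ r θ t * d2 uθ r θ t
          + 1 / r * ur r θ t * uθ r θ t + α * (σ r θ t / r) * d2 σ r θ t
        = α / (2 * γ) * (σ r θ t ^ 2 / r) * d2 S r θ t) ∧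
      (dt σ r θ t + ur r θ t * d1 σ r θ t + 1 / r * uθ r θ t * d2 σ r θ t
          + α * σ r θ t * (1 / r * ur r θ t + d1 ur r θ t + 1 / r * d2 uθ r θ t) = 0) ∧
      (dt S r θ t + ur r θ t * d1 S r θ t + 1 / r * uθ r θ t * d2 S r θ t = 0) := by

  intro r θ hr t ht
  have hr' : r ≠ 0 := ne_of_gt hr
  -- derivative computations
  have Dt : ∀ f : ℝ → ℝ → ℝ, deriv (fun s => r * f θ s) t = r * pdt f θ t := by
    intro f; rw [pdt, deriv_const_mul_field]
  have Dx : ∀ f : ℝ → ℝ → ℝ, deriv (fun s => r * f s t) θ = r * pdx f θ t := by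
    intro f; rw [pdx, deriv_const_mul_field]
  have Dr : ∀ f : ℝ → ℝ → ℝ, deriv (fun s => s * f θ t) r = f θ t := by
    intro f
    simp [deriv_mul_const_field]
  have eur1 : (fun s => ur s θ t) = fun s => s * a θ t := funext fun s => hur s θ t
  have eur2 : (fun s => ur r s t) = fun s => r * a s t := funext fun s => hur r s t
  have eur3 : (fun s => ur r θ s) = fun s => r * a θ s := funext fun s => hur r θ s
  have euθ1 : (fun s => uθ s θ t) = fun s => s * b θ t := funext fun s => huθ s θ t
  have euθ2 : (fun s => uθ r s t) = fun s => r * b s t := funext fun s => huθ r s t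
  have euθ3 : (fun s => uθ r θ s) = fun s => r * b θ s := funext fun s => huθ r θ s
  have eσ1 : (fun s => σ s θ t) = fun s => s * c θ t := funext fun s => hσ s θ t
  have eσ2 : (fun s => σ r s t) = fun s => r * c s t := funext fun s => hσ r s t
  have eσ3 : (fun s => σ r θ s) = fun s => r * c θ s := funext fun s => hσ r θ s
  have eS1 : (fun s => S s θ t) = fun s => k θ t := funext fun s => hS s θ t
  have eS2 : (fun s => S r s t) = fun s => k s t := funext fun s => hS r s t
  have eS3 : (fun s => S r θ s) = fun s => k θ s := funext fun s => hS r θ s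
  have d1ur : d1 ur r θ t = a θ t := by rw [d1, eur1, Dr]
  have d2ur : d2 ur r θ t = r * pdx a θ t := by rw [d2, eur2, Dx]
  have dtur : dt ur r θ t = r * pdt a θ t := by rw [dt, eur3, Dt]
  have d1uθ : d1 uθ r θ t = b θ t := by rw [d1, euθ1, Dr]
  have d2uθ : d2 uθ r θ t = r * pdx b θ t := by rw [d2, euθ2, Dx]
  have dtuθ : dt uθ r θ t = r * pdt b θ t := by rw [dt, euθ3, Dt]
  have d1σ : d1 σ r θ t = c θ t := by rw [d1, eσ1, Dr]
  have d2σ : d2 σ r θ t = r * pdx c θ t := by rw [d2, eσ2, Dx]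
  have dtσ : dt σ r θ t = r * pdt c θ t := by rw [dt, eσ3, Dt]
  have d1S : d1 S r θ t = 0 := by rw [d1, eS1]; exact deriv_const r _
  have d2S : d2 S r θ t = pdx k θ t := by rw [d2, eS2]; rfl
  have dtS : dt S r θ t = pdt k θ t := by rw [dt, eS3]; rfl
  have h1 := heq1 θ t ht
  have hγ0 : γ ≠ 0 := by linarith
  have h2 := heq2 θ t ht
  field_simp at h2
  have h3 := heq3 θ t ht
  have h4 := heq4 θ t ht
  refine ⟨?_, ?_, ?_, ?_⟩
  · rw [dtur, d1ur, d2ur, d1S, d1σ, hur, huθ, hσ]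
    field_simp
    linear_combination 2 * γ * h1
  · rw [dtuθ, d1uθ, d2uθ, d2S, d2σ, hur, huθ, hσ]
    field_simp
    linear_combination h2
  · rw [dtσ, d1σ, d2σ, d1ur, d2uθ, hur, huθ, hσ]
    field_simp
    linear_combination r * h3 + 2 * r * a θ t * c θ t * hα
  · rw [dtS, d1S, d2S, hur, huθ]
    field_simp
    linear_combination h4
end
end

section
/- Let (w, z, k, a) be a C¹ solution of the azimuthal Euler system on 𝕋 × [−ε, T) with c := (w−z)/2 > 0 everywhere, let φ > 0, and let Ψ be the flow of λ := (1−φ)w + (1/3+φ)z, assumed C¹ in the label x. Then for all (x,t) ∈ 𝕋 × [−ε, T): ∂_xΨ(x,t) = (c₀(x)/c(Ψ(x,t),t))^{(1−φ)/φ} · exp( ∫_{−ε}^{t} [ (2 − 2/(3φ)) ∂_θz − (8(1−φ)/(3φ)) a ](Ψ(x,τ),τ) dτ ), where c₀ := c(·, −ε). -/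
open Real Set

noncomputable section

/-- The three wave speeds of the azimuthal Euler system. -/
def lam1 (w z : ℝ) : ℝ := w / 3 + z
def lam2 (w z : ℝ) : ℝ := 2 / 3 * (w + z)
def lam3 (w z : ℝ) : ℝ := w + z / 3

/-- The azimuthal Euler system (γ = 2, rescaled time) at a point. -/
def EulerEq (w z k a : ℝ → ℝ → ℝ) (θ t : ℝ) : Prop :=
  pdt w θ t + lam3 (w θ t) (z θ t) * pdx w θ t
      = -(8 / 3) * a θ t * w θ t + 1 / 24 * (w θ t - z θ t) ^ 2 * pdx k θ t ∧
  pdt z θ t + lam1 (w θ t) (z θ t) * pdx z θ t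
      = -(8 / 3) * a θ t * z θ t + 1 / 24 * (w θ t - z θ t) ^ 2 * pdx k θ t ∧
  pdt k θ t + lam2 (w θ t) (z θ t) * pdx k θ t = 0 ∧
  pdt a θ t + lam2 (w θ t) (z θ t) * pdx a θ t
      = -(4 / 3) * a θ t ^ 2 + 1 / 3 * (w θ t + z θ t) ^ 2 - 1 / 6 * (w θ t - z θ t) ^ 2

/-- The flow of a speed field, started at time `−ε`. -/
def IsFlowOn (speed Ψ : ℝ → ℝ → ℝ) (ε : ℝ) (J : Set ℝ) : Prop :=
  (∀ x, Ψ x (-ε) = x) ∧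
  ∀ x : ℝ, ∀ t ∈ J, HasDerivWithinAt (fun s => Ψ x s) (speed (Ψ x t) t) J t

open Topology Filter

lemma uniqueDiffOn_strip (a b : ℝ) : UniqueDiffOn ℝ ((univ : Set ℝ) ×ˢ Ico a b) :=
  uniqueDiffOn_univ.prod (uniqueDiffOn_Ico a b)

/-- On the strip, the x-slice has derivative the partial fderivWithin applied to (1,0). -/
lemma hasDerivAt_slice_x {f : ℝ → ℝ → ℝ} {a b : ℝ}
    (hf : ContDiffOn ℝ 1 (fun p : ℝ × ℝ => f p.1 p.2) ((univ : Set ℝ) ×ˢ Ico a b))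
    {θ s : ℝ} (hs : s ∈ Ico a b) :
    HasDerivAt (fun y => f y s)
      ((fderivWithin ℝ (fun p : ℝ × ℝ => f p.1 p.2) ((univ : Set ℝ) ×ˢ Ico a b) (θ, s)) (1, 0)) θ := by
  set S := (univ : Set ℝ) ×ˢ Ico a b with hS
  have hmem : ((θ, s) : ℝ × ℝ) ∈ S := ⟨mem_univ _, hs⟩
  have hdiff : DifferentiableWithinAt ℝ (fun p : ℝ × ℝ => f p.1 p.2) S (θ, s) :=
    (hf.differentiableOn one_ne_zero) _ hmem
  have hL := hdiff.hasFDerivWithinAt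
  have hcurve : HasDerivAt (fun y : ℝ => ((y, s) : ℝ × ℝ)) (1, 0) θ :=
    HasDerivAt.prodMk (hasDerivAt_id θ) (hasDerivAt_const θ s)
  have hmaps : MapsTo (fun y : ℝ => ((y, s) : ℝ × ℝ)) (univ : Set ℝ) S :=
    fun y _ => ⟨mem_univ _, hs⟩
  have := hL.comp_hasDerivWithinAt θ (hcurve.hasDerivWithinAt (s := univ)) hmaps
  rw [hasDerivWithinAt_univ] at this
  exact this

lemma pdx_eq_fderivWithin {f : ℝ → ℝ → ℝ} {a b : ℝ}
    (hf : ContDiffOn ℝ 1 (fun p : ℝ × ℝ => f p.1 p.2) ((univ : Set ℝ) ×ˢ Ico a b))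
    {θ s : ℝ} (hs : s ∈ Ico a b) :
    pdx f θ s
      = (fderivWithin ℝ (fun p : ℝ × ℝ => f p.1 p.2) ((univ : Set ℝ) ×ˢ Ico a b) (θ, s)) (1, 0) :=
  (hasDerivAt_slice_x hf hs).deriv

lemma pdx_continuousOn {f : ℝ → ℝ → ℝ} {a b : ℝ}
    (hf : ContDiffOn ℝ 1 (fun p : ℝ × ℝ => f p.1 p.2) ((univ : Set ℝ) ×ˢ Ico a b)) :
    ContinuousOn (fun p : ℝ × ℝ => pdx f p.1 p.2) ((univ : Set ℝ) ×ˢ Ico a b) := by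
  have hu := uniqueDiffOn_strip a b
  have hcont := hf.continuousOn_fderivWithin hu le_rfl
  have : ContinuousOn (fun p : ℝ × ℝ =>
      (fderivWithin ℝ (fun p : ℝ × ℝ => f p.1 p.2) ((univ : Set ℝ) ×ˢ Ico a b) p) (1, 0))
      ((univ : Set ℝ) ×ˢ Ico a b) :=
    ((ContinuousLinearMap.apply ℝ ℝ ((1 : ℝ), (0 : ℝ))).continuous.comp_continuousOn hcont)
  exact this.congr fun p hp => by
    obtain ⟨p1, p2⟩ := p
    exact pdx_eq_fderivWithin hf hp.2

/-- Interior calculus: both slices differentiate, and the chain rule along a curve. -/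
lemma hasDerivAt_comp_curve {f : ℝ → ℝ → ℝ} {a b : ℝ}
    (hf : ContDiffOn ℝ 1 (fun p : ℝ × ℝ => f p.1 p.2) ((univ : Set ℝ) ×ˢ Ico a b))
    {s : ℝ} (hs : s ∈ Ioo a b) {γ : ℝ → ℝ} {γ' : ℝ} (hγ : HasDerivAt γ γ' s) :
    HasDerivAt (fun τ => f (γ τ) τ) (γ' * pdx f (γ s) s + pdt f (γ s) s) s := by
  have hnhds : (univ : Set ℝ) ×ˢ Ico a b ∈ 𝓝 ((γ s, s) : ℝ × ℝ) := by
    have hopen : IsOpen ((univ : Set ℝ) ×ˢ Ioo a b) := isOpen_univ.prod isOpen_Ioo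
    exact Filter.mem_of_superset (hopen.mem_nhds ⟨mem_univ _, hs⟩)
      (prod_mono_right Ioo_subset_Ico_self)
  have hCA : ContDiffAt ℝ 1 (fun p : ℝ × ℝ => f p.1 p.2) (γ s, s) := hf.contDiffAt hnhds
  have hdiff : DifferentiableAt ℝ (fun p : ℝ × ℝ => f p.1 p.2) (γ s, s) :=
    hCA.differentiableAt one_ne_zero
  set L := fderiv ℝ (fun p : ℝ × ℝ => f p.1 p.2) (γ s, s) with hLdef
  have hx : HasDerivAt (fun y => f y s) (L (1, 0)) (γ s) := by
    have hcurve : HasDerivAt (fun y : ℝ => ((y, s) : ℝ × ℝ)) (1, 0) (γ s) :=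
      HasDerivAt.prodMk (hasDerivAt_id _) (hasDerivAt_const _ s)
    exact hdiff.hasFDerivAt.comp_hasDerivAt_of_eq (γ s) hcurve rfl
  have ht : HasDerivAt (fun τ => f (γ s) τ) (L (0, 1)) s := by
    have hcurve : HasDerivAt (fun τ : ℝ => ((γ s, τ) : ℝ × ℝ)) (0, 1) s :=
      HasDerivAt.prodMk (hasDerivAt_const _ _) (hasDerivAt_id _)
    exact hdiff.hasFDerivAt.comp_hasDerivAt _ hcurve
  have hpdx : pdx f (γ s) s = L (1, 0) := hx.deriv
  have hpdt : pdt f (γ s) s = L (0, 1) := ht.deriv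
  have hcurve : HasDerivAt (fun τ : ℝ => ((γ τ, τ) : ℝ × ℝ)) (γ', 1) s :=
    HasDerivAt.prodMk hγ (hasDerivAt_id s)
  have hcomp : HasDerivAt ((fun p : ℝ × ℝ => f p.1 p.2) ∘ fun τ : ℝ => ((γ τ, τ) : ℝ × ℝ))
      (L (γ', 1)) s := hdiff.hasFDerivAt.comp_hasDerivAt_of_eq s hcurve rfl
  have hval : L (γ', 1) = γ' * pdx f (γ s) s + pdt f (γ s) s := by
    have : ((γ', 1) : ℝ × ℝ) = γ' • (1, 0) + (0, 1) := by
      simp [Prod.ext_iff]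
    rw [this, map_add, L.map_smul, hpdx, hpdt, smul_eq_mul]
  rw [← hval]
  exact hcomp

lemma hasDerivAt_pdt {f : ℝ → ℝ → ℝ} {a b : ℝ}
    (hf : ContDiffOn ℝ 1 (fun p : ℝ × ℝ => f p.1 p.2) ((univ : Set ℝ) ×ˢ Ico a b))
    {θ s : ℝ} (hs : s ∈ Ioo a b) :
    HasDerivAt (fun τ => f θ τ) (pdt f θ s) s := by
  have := hasDerivAt_comp_curve hf hs (γ := fun _ => θ) (γ' := 0) (hasDerivAt_const s θ)
  simpa using this

/-- Bound and Lipschitz estimate for a periodic C¹ function on a compact time slab. -/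
lemma exists_lipschitz_bound {f : ℝ → ℝ → ℝ} {a b t : ℝ}
    (hf : ContDiffOn ℝ 1 (fun p : ℝ × ℝ => f p.1 p.2) ((univ : Set ℝ) ×ˢ Ico a b))
    (hper : ∀ θ s : ℝ, f (θ + 2 * π) s = f θ s) (hat : a ≤ t) (htb : t < b) :
    ∃ L : ℝ, 0 ≤ L ∧ (∀ θ s, s ∈ Icc a t → |pdx f θ s| ≤ L) ∧
      (∀ s ∈ Icc a t, ∀ θ₁ θ₂ : ℝ, |f θ₁ s - f θ₂ s| ≤ L * |θ₁ - θ₂|) := by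
  have hsub : Icc a t ⊆ Ico a b := fun s hs => ⟨hs.1, lt_of_le_of_lt hs.2 htb⟩
  have hKsub : (Icc (0:ℝ) (2*π)) ×ˢ Icc a t ⊆ (univ : Set ℝ) ×ˢ Ico a b :=
    fun p hp => ⟨mem_univ _, hsub hp.2⟩
  have hKcp : IsCompact ((Icc (0:ℝ) (2*π)) ×ˢ Icc a t) := isCompact_Icc.prod isCompact_Icc
  have hcont : ContinuousOn (fun p : ℝ × ℝ => pdx f p.1 p.2) ((Icc (0:ℝ) (2*π)) ×ˢ Icc a t) :=
    (pdx_continuousOn hf).mono hKsub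
  obtain ⟨C, hC⟩ := hKcp.exists_bound_of_continuousOn hcont
  refine ⟨max C 0, le_max_right _ _, ?_, ?_⟩
  · -- pointwise bound via periodicity
    have hbound : ∀ θ s, s ∈ Icc a t → |pdx f θ s| ≤ max C 0 := by
      intro θ s hs
      have hperiodic : Function.Periodic (fun y => deriv (fun y' => f y' s) y) (2 * π) := by
        intro y
        have hfun : (fun x => f (x + 2 * π) s) = fun x => f x s := funext fun x => hper x s
        have := deriv_comp_add_const (fun x => f x s) (2 * π) y
        rw [hfun] at this
        simpa using this.symm
      obtain ⟨y, hy, hval⟩ := hperiodic.exists_mem_Ico₀ Real.two_pi_pos θ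
      have hmem : ((y, s) : ℝ × ℝ) ∈ (Icc (0:ℝ) (2*π)) ×ˢ Icc a t :=
        ⟨⟨hy.1, le_of_lt hy.2⟩, hs⟩
      have := hC (y, s) hmem
      simp only [Real.norm_eq_abs] at this
      calc |pdx f θ s| = |pdx f y s| := by rw [pdx, hval]; rfl
        _ ≤ C := this
        _ ≤ max C 0 := le_max_left _ _
    exact hbound
  · intro s hs θ₁ θ₂
    have hL0 : (0:ℝ) ≤ max C 0 := le_max_right _ _
    have hdiffslice : Differentiable ℝ (fun y => f y s) := fun y =>
      (hasDerivAt_slice_x hf (hsub hs)).differentiableAt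
    have hlip : LipschitzWith (max C 0).toNNReal (fun y => f y s) := by
      apply lipschitzWith_of_nnnorm_deriv_le hdiffslice
      intro y
      have h1 : ‖deriv (fun y' => f y' s) y‖ ≤ max C 0 := by
        have hperiodic : Function.Periodic (fun y => deriv (fun y' => f y' s) y) (2 * π) := by
          intro y'
          have hfun : (fun x => f (x + 2 * π) s) = fun x => f x s := funext fun x => hper x s
          have := deriv_comp_add_const (fun x => f x s) (2 * π) y'
          rw [hfun] at this
          simpa using this.symm
        obtain ⟨y', hy', hval⟩ := hperiodic.exists_mem_Ico₀ Real.two_pi_pos y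
        have hmem : ((y', s) : ℝ × ℝ) ∈ (Icc (0:ℝ) (2*π)) ×ˢ Icc a t :=
          ⟨⟨hy'.1, le_of_lt hy'.2⟩, hs⟩
        have h2 := hC (y', s) hmem
        simp only [Real.norm_eq_abs] at h2 ⊢
        calc |deriv (fun y' => f y' s) y| = |pdx f y' s| := by rw [hval]; rfl
          _ ≤ C := h2
          _ ≤ max C 0 := le_max_left _ _
      rw [← NNReal.coe_le_coe, coe_nnnorm, Real.coe_toNNReal _ hL0]
      exact h1
    have := hlip.dist_le_mul θ₁ θ₂
    rw [Real.dist_eq, Real.dist_eq, Real.coe_toNNReal _ hL0] at this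
    exact this

/-- Grönwall estimate: flows of an `L`-Lipschitz field separate at most exponentially. -/
lemma flow_gronwall {speed Ψ : ℝ → ℝ → ℝ} {a b t L : ℝ}
    (hinit : ∀ x, Ψ x a = x)
    (hflow : ∀ x : ℝ, ∀ s ∈ Ico a b,
      HasDerivWithinAt (fun s' => Ψ x s') (speed (Ψ x s) s) (Ico a b) s)
    (hat : a ≤ t) (htb : t < b) (hL : 0 ≤ L)
    (hlip : ∀ s ∈ Icc a t, ∀ θ₁ θ₂ : ℝ, |speed θ₁ s - speed θ₂ s| ≤ L * |θ₁ - θ₂|)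
    (x₁ x₂ : ℝ) :
    ∀ s ∈ Icc a t, |Ψ x₂ s - Ψ x₁ s| ≤ |x₂ - x₁| * exp (L * (s - a)) := by
  have hsub : Icc a t ⊆ Ico a b := fun s hs => ⟨hs.1, lt_of_le_of_lt hs.2 htb⟩
  have hcontΨ : ∀ x : ℝ, ContinuousOn (fun s => Ψ x s) (Icc a t) := by
    intro x
    exact fun s hs => ((hflow x s (hsub hs)).differentiableWithinAt.continuousWithinAt).mono hsub
  set f : ℝ → ℝ := fun s => Ψ x₂ s - Ψ x₁ s with hfdef
  have hcont : ContinuousOn f (Icc a t) := (hcontΨ x₂).sub (hcontΨ x₁)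
  have hmemIci : ∀ s ∈ Ico a t, Ico a b ∈ 𝓝[Ici s] s := by
    intro s hs
    have hsb : s < b := lt_of_lt_of_le hs.2 (le_of_lt htb)
    apply Filter.mem_of_superset
      (Filter.inter_mem self_mem_nhdsWithin
        (mem_nhdsWithin_of_mem_nhds (Iio_mem_nhds hsb)))
    rintro y ⟨hy1, hy2⟩
    exact ⟨le_trans hs.1 hy1, hy2⟩
  have hf' : ∀ s ∈ Ico a t,
      HasDerivWithinAt f (speed (Ψ x₂ s) s - speed (Ψ x₁ s) s) (Ici s) s := by
    intro s hs
    have hs' : s ∈ Ico a b := ⟨hs.1, lt_of_lt_of_le hs.2 (le_of_lt htb)⟩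
    exact ((hflow x₂ s hs').sub (hflow x₁ s hs')).mono_of_mem_nhdsWithin (hmemIci s hs)
  have hbound : ∀ s ∈ Ico a t,
      ‖speed (Ψ x₂ s) s - speed (Ψ x₁ s) s‖ ≤ L * ‖f s‖ + 0 := by
    intro s hs
    rw [add_zero, Real.norm_eq_abs, Real.norm_eq_abs]
    exact hlip s ⟨hs.1, le_of_lt hs.2⟩ _ _
  have ha : ‖f a‖ ≤ |x₂ - x₁| := by simp [hfdef, hinit]
  have := norm_le_gronwallBound_of_norm_deriv_right_le hcont hf' ha hbound
  intro s hs
  have h2 := this s hs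
  rwa [gronwallBound_ε0, Real.norm_eq_abs] at h2

/-- The flow's spatial derivative is exponentially bounded. -/
lemma pdx_flow_bound {speed Ψ : ℝ → ℝ → ℝ} {a b t L : ℝ}
    (hinit : ∀ x, Ψ x a = x)
    (hflow : ∀ x : ℝ, ∀ s ∈ Ico a b,
      HasDerivWithinAt (fun s' => Ψ x s') (speed (Ψ x s) s) (Ico a b) s)
    (hat : a ≤ t) (htb : t < b) (hL : 0 ≤ L)
    (hlip : ∀ s ∈ Icc a t, ∀ θ₁ θ₂ : ℝ, |speed θ₁ s - speed θ₂ s| ≤ L * |θ₁ - θ₂|)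
    (hΨx : ∀ y : ℝ, ∀ s ∈ Icc a t, DifferentiableAt ℝ (fun y' => Ψ y' s) y) :
    ∀ y : ℝ, ∀ s ∈ Icc a t, |pdx Ψ y s| ≤ exp (L * (t - a)) := by
  intro y s hs
  set C : ℝ := exp (L * (t - a)) with hC
  have hC0 : 0 ≤ C := (exp_pos _).le
  have hlipslice : LipschitzWith C.toNNReal (fun y' => Ψ y' s) := by
    apply LipschitzWith.of_dist_le_mul
    intro y₁ y₂
    rw [Real.dist_eq, Real.dist_eq, Real.coe_toNNReal _ hC0]
    calc |Ψ y₁ s - Ψ y₂ s| ≤ |y₁ - y₂| * exp (L * (s - a)) :=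
          flow_gronwall hinit hflow hat htb hL hlip y₂ y₁ s hs
      _ ≤ |y₁ - y₂| * C := by
          apply mul_le_mul_of_nonneg_left _ (abs_nonneg _)
          exact exp_le_exp.2 (mul_le_mul_of_nonneg_left (by linarith [hs.2]) hL)
      _ = C * |y₁ - y₂| := mul_comm _ _
  have := ((hΨx y s hs).hasDerivAt).le_of_lipschitz hlipslice
  rwa [Real.norm_eq_abs, Real.coe_toNNReal _ hC0] at this

/-- Measurability in time of the flow's spatial derivative. -/
lemma pdx_flow_measurable {Ψ : ℝ → ℝ → ℝ} {a t x : ℝ}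
    (hcont : ∀ y : ℝ, ContinuousOn (fun s => Ψ y s) (Icc a t))
    (hdiff : ∀ s ∈ Icc a t, DifferentiableAt ℝ (fun y => Ψ y s) x) :
    MeasureTheory.AEStronglyMeasurable (fun s => pdx Ψ x s)
      (MeasureTheory.volume.restrict (Icc a t)) := by
  set q : ℕ → ℝ → ℝ := fun n s => (Ψ (x + 1 / (n + 1)) s - Ψ x s) * (n + 1) with hq
  have hqmeas : ∀ n, MeasureTheory.AEStronglyMeasurable (q n)
      (MeasureTheory.volume.restrict (Icc a t)) := by
    intro n
    exact (((hcont _).sub (hcont x)).mul continuousOn_const).aestronglyMeasurable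
      measurableSet_Icc
  apply aestronglyMeasurable_of_tendsto_ae Filter.atTop hqmeas
  rw [MeasureTheory.ae_restrict_iff' measurableSet_Icc]
  apply Filter.Eventually.of_forall
  intro s hs
  have hda := (hdiff s hs).hasDerivAt
  have hslope := hasDerivAt_iff_tendsto_slope.1 hda
  have hu : Filter.Tendsto (fun n : ℕ => x + 1 / ((n : ℝ) + 1)) Filter.atTop (𝓝[≠] x) := by
    apply tendsto_nhdsWithin_of_tendsto_nhds_of_eventually_within
    · have h0 : Filter.Tendsto (fun n : ℕ => 1 / ((n : ℝ) + 1)) Filter.atTop (𝓝 0) :=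
        tendsto_one_div_add_atTop_nhds_zero_nat
      have := h0.const_add x
      simpa using this
    · apply Filter.Eventually.of_forall
      intro n
      have hpos : (0:ℝ) < 1 / ((n : ℝ) + 1) := by positivity
      simp only [mem_compl_iff, mem_singleton_iff]
      intro h
      nlinarith [h]
  have hqeq : ∀ n : ℕ, q n s = slope (fun y => Ψ y s) x (x + 1 / ((n : ℝ) + 1)) := by
    intro n
    rw [slope_def_field]
    rw [add_sub_cancel_left]
    rw [div_div_eq_mul_div, div_one]
  have htend : Filter.Tendsto (fun n => q n s) Filter.atTop
      (𝓝 (deriv (fun y => Ψ y s) x)) := by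
    have h2 := hslope.comp hu
    exact Filter.Tendsto.congr (fun n => (hqeq n).symm) h2
  exact htend

/-- FTC form of the flow equation. -/
lemma flow_integral_repr {speed Ψ : ℝ → ℝ → ℝ} {a b t : ℝ}
    (hsp : ContDiffOn ℝ 1 (fun p : ℝ × ℝ => speed p.1 p.2) ((univ : Set ℝ) ×ˢ Ico a b))
    (hinit : ∀ x, Ψ x a = x)
    (hflow : ∀ x : ℝ, ∀ s ∈ Ico a b,
      HasDerivWithinAt (fun s' => Ψ x s') (speed (Ψ x s) s) (Ico a b) s)
    (hat : a ≤ t) (htb : t < b) (y : ℝ) :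
    ∀ u ∈ Icc a t, Ψ y u = y + ∫ s in a..u, speed (Ψ y s) s := by
  intro u hu
  have hsub : Icc a u ⊆ Ico a b := fun s hs =>
    ⟨hs.1, lt_of_le_of_lt (le_trans hs.2 hu.2) htb⟩
  have hcontΨ : ContinuousOn (fun s => Ψ y s) (Icc a u) := fun s hs =>
    ((hflow y s (hsub hs)).differentiableWithinAt.continuousWithinAt).mono hsub
  have hcontg : ContinuousOn (fun s => speed (Ψ y s) s) (Icc a u) := by
    have hcurve : ContinuousOn (fun s => ((Ψ y s, s) : ℝ × ℝ)) (Icc a u) :=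
      hcontΨ.prodMk continuousOn_id
    have hmaps : MapsTo (fun s => ((Ψ y s, s) : ℝ × ℝ)) (Icc a u)
        ((univ : Set ℝ) ×ˢ Ico a b) := fun s hs => ⟨mem_univ _, hsub hs⟩
    exact (hsp.continuousOn.comp hcurve hmaps)
  have hint : IntervalIntegrable (fun s => speed (Ψ y s) s) MeasureTheory.volume a u :=
    hcontg.intervalIntegrable_of_Icc hu.1
  have hderiv : ∀ s ∈ Ioo a u, HasDerivWithinAt (fun s' => Ψ y s')
      (speed (Ψ y s) s) (Ioi s) s := by
    intro s hs
    have hs' : s ∈ Ico a b := hsub ⟨le_of_lt hs.1, le_of_lt hs.2⟩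
    apply (hflow y s hs').mono_of_mem_nhdsWithin
    have hsb : s < b := hs'.2
    apply Filter.mem_of_superset
      (Filter.inter_mem self_mem_nhdsWithin
        (mem_nhdsWithin_of_mem_nhds (Iio_mem_nhds hsb)))
    rintro v ⟨hv1, hv2⟩
    exact ⟨le_trans hs'.1 (le_of_lt hv1), hv2⟩
  have := intervalIntegral.integral_eq_sub_of_hasDeriv_right_of_le hu.1 hcontΨ hderiv hint
  rw [this, hinit]
  ring

/-- Variational integral equation for the spatial derivative of the flow. -/
lemma flow_variational_eq {speed Ψ : ℝ → ℝ → ℝ} {a b t L : ℝ}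
    (hsp : ContDiffOn ℝ 1 (fun p : ℝ × ℝ => speed p.1 p.2) ((univ : Set ℝ) ×ˢ Ico a b))
    (hinit : ∀ x, Ψ x a = x)
    (hflow : ∀ x : ℝ, ∀ s ∈ Ico a b,
      HasDerivWithinAt (fun s' => Ψ x s') (speed (Ψ x s) s) (Ico a b) s)
    (hat : a ≤ t) (htb : t < b) (hL : 0 ≤ L)
    (hpdxbound : ∀ θ s : ℝ, s ∈ Icc a t → |pdx speed θ s| ≤ L)
    (hlip : ∀ s ∈ Icc a t, ∀ θ₁ θ₂ : ℝ, |speed θ₁ s - speed θ₂ s| ≤ L * |θ₁ - θ₂|)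
    (hΨx : ∀ y : ℝ, ∀ s ∈ Ico a b, DifferentiableAt ℝ (fun y' => Ψ y' s) y)
    (x : ℝ) :
    ∀ u ∈ Icc a t, pdx Ψ x u = 1 + ∫ s in a..u, pdx speed (Ψ x s) s * pdx Ψ x s := by
  intro u hu
  have hsubt : Icc a t ⊆ Ico a b := fun s hs => ⟨hs.1, lt_of_le_of_lt hs.2 htb⟩
  have hsubu : Icc a u ⊆ Icc a t := Icc_subset_Icc le_rfl hu.2
  have hΨx' : ∀ y : ℝ, ∀ s ∈ Icc a t, DifferentiableAt ℝ (fun y' => Ψ y' s) y :=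
    fun y s hs => hΨx y s (hsubt hs)
  have hcontΨ : ∀ y : ℝ, ContinuousOn (fun s => Ψ y s) (Icc a t) := fun y s hs =>
    ((hflow y s (hsubt hs)).differentiableWithinAt.continuousWithinAt).mono hsubt
  have hIsub : uIoc a u ⊆ Icc a t := by
    rw [uIoc_of_le hu.1]
    exact fun s hs => ⟨le_of_lt hs.1, le_trans hs.2 hu.2⟩
  set C : ℝ := exp (L * (t - a)) with hC
  have hbnd := pdx_flow_bound hinit hflow hat htb hL hlip hΨx'
  -- measurability of `F y := fun s => speed (Ψ y s) s` for all y
  have hFcont : ∀ y : ℝ, ContinuousOn (fun s => speed (Ψ y s) s) (Icc a t) := by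
    intro y
    have hcurve : ContinuousOn (fun s => ((Ψ y s, s) : ℝ × ℝ)) (Icc a t) :=
      (hcontΨ y).prodMk continuousOn_id
    exact hsp.continuousOn.comp hcurve fun s hs => ⟨mem_univ _, hsubt hs⟩
  have hF'cont1 : ContinuousOn (fun s => pdx speed (Ψ x s) s) (Icc a t) := by
    have hcurve : ContinuousOn (fun s => ((Ψ x s, s) : ℝ × ℝ)) (Icc a t) :=
      (hcontΨ x).prodMk continuousOn_id
    exact (pdx_continuousOn hsp).comp hcurve fun s hs => ⟨mem_univ _, hsubt hs⟩
  have key := intervalIntegral.hasDerivAt_integral_of_dominated_loc_of_deriv_le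
    (F := fun y s => speed (Ψ y s) s)
    (F' := fun y s => pdx speed (Ψ y s) s * pdx Ψ y s)
    (x₀ := x) (a := a) (b := u) (μ := MeasureTheory.volume)
    (bound := fun _ => L * C) (s := univ) univ_mem
    ?_ ?_ ?_ ?_ ?_ ?_
  · obtain ⟨-, hder⟩ := key
    have hfun : (fun y => Ψ y u) = fun y => y + ∫ s in a..u, speed (Ψ y s) s :=
      funext fun y => flow_integral_repr hsp hinit hflow hat htb y u hu
    have hder2 : HasDerivAt (fun y => Ψ y u)
        (1 + ∫ s in a..u, pdx speed (Ψ x s) s * pdx Ψ x s) x := by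
      rw [hfun]
      exact (hasDerivAt_id x).add hder
    exact hder2.deriv
  · apply Filter.Eventually.of_forall
    intro y
    exact (((hFcont y).mono hIsub).aestronglyMeasurable measurableSet_uIoc)
  · exact ((hFcont x).mono hsubu).intervalIntegrable_of_Icc hu.1
  · apply MeasureTheory.AEStronglyMeasurable.mul
    · exact ((hF'cont1.mono hIsub).aestronglyMeasurable measurableSet_uIoc)
    · have := pdx_flow_measurable (a := a) (t := t) (x := x) hcontΨ (hΨx' x)
      exact this.mono_measure (MeasureTheory.Measure.restrict_mono hIsub le_rfl)
  · apply Filter.Eventually.of_forall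
    intro s hs y _
    have hs' : s ∈ Icc a t := hIsub hs
    rw [Real.norm_eq_abs, abs_mul]
    exact mul_le_mul (hpdxbound _ s hs') (hbnd y s hs') (abs_nonneg _) hL
  · exact intervalIntegrable_const
  · apply Filter.Eventually.of_forall
    intro s hs y _
    have hs' : s ∈ Ico a b := hsubt (hIsub hs)
    have houter0 := hasDerivAt_slice_x hsp hs' (θ := Ψ y s)
    have houter : HasDerivAt (fun θ => speed θ s) (pdx speed (Ψ y s) s) (Ψ y s) := by
      rw [pdx, houter0.deriv]
      exact houter0
    have hinner : HasDerivAt (fun y' => Ψ y' s) (pdx Ψ y s) y :=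
      (hΨx y s hs').hasDerivAt
    have := houter.comp y hinner
    exact this

/-- Explicit formula for the spatial derivative of the flow of
`λ = (1−φ)w + (1/3+φ)z`. -/
theorem flow_derivative_formula
    (ε T : ℝ) (hT : -ε < T)
    (w z k a : ℝ → ℝ → ℝ)
    (hw : ContDiffOn ℝ 1 (fun p : ℝ × ℝ => w p.1 p.2) (univ ×ˢ Ico (-ε) T))
    (hz : ContDiffOn ℝ 1 (fun p : ℝ × ℝ => z p.1 p.2) (univ ×ˢ Ico (-ε) T))
    (hk : ContDiffOn ℝ 1 (fun p : ℝ × ℝ => k p.1 p.2) (univ ×ˢ Ico (-ε) T))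
    (ha : ContDiffOn ℝ 1 (fun p : ℝ × ℝ => a p.1 p.2) (univ ×ˢ Ico (-ε) T))
    (hwper : ∀ θ t : ℝ, w (θ + 2 * π) t = w θ t)
    (hzper : ∀ θ t : ℝ, z (θ + 2 * π) t = z θ t)
    (hkper : ∀ θ t : ℝ, k (θ + 2 * π) t = k θ t)
    (haper : ∀ θ t : ℝ, a (θ + 2 * π) t = a θ t)
    (heuler : ∀ θ : ℝ, ∀ t ∈ Ico (-ε) T, EulerEq w z k a θ t)
    (hcpos : ∀ θ : ℝ, ∀ t ∈ Ico (-ε) T, 0 < (w θ t - z θ t) / 2)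
    (φ : ℝ) (hφ : 0 < φ)
    (Ψ : ℝ → ℝ → ℝ)
    (hΨ : IsFlowOn (fun θ t => (1 - φ) * w θ t + (1 / 3 + φ) * z θ t) Ψ ε (Ico (-ε) T))
    (hΨx : ∀ x : ℝ, ∀ t ∈ Ico (-ε) T, DifferentiableAt ℝ (fun y => Ψ y t) x) :
    ∀ x : ℝ, ∀ t ∈ Ico (-ε) T,
      pdx Ψ x t
        = ((w x (-ε) - z x (-ε)) / 2 / ((w (Ψ x t) t - z (Ψ x t) t) / 2)) ^ ((1 - φ) / φ)
            * Real.exp (∫ τ in (-ε)..t,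
                ((2 - 2 / (3 * φ)) * pdx z (Ψ x τ) τ
                  - 8 * (1 - φ) / (3 * φ) * a (Ψ x τ) τ)) := by
  obtain ⟨hΨ0, hΨflow⟩ := hΨ
  intro x t ht
  have hΨid : (fun y => Ψ y (-ε)) = id := funext fun y => hΨ0 y
  have hpdxΨ0 : pdx Ψ x (-ε) = 1 := by rw [pdx, hΨid, deriv_id x]
  have hc0pos : 0 < (w x (-ε) - z x (-ε)) / 2 := hcpos x (-ε) ⟨le_rfl, hT⟩
  rcases eq_or_lt_of_le ht.1 with hteq | htlt
  · -- trivial case t = -ε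
    rw [← hteq, hpdxΨ0, intervalIntegral.integral_same, Real.exp_zero, hΨ0 x,
      div_self (ne_of_gt hc0pos), Real.one_rpow, one_mul]
  · -- main case -ε < t
    set lf : ℝ → ℝ → ℝ := fun θ s => (1 - φ) * w θ s + (1 / 3 + φ) * z θ s with hlfdef
    set cf : ℝ → ℝ → ℝ := fun θ s => (w θ s - z θ s) / 2 with hcfdef
    have hlf : ContDiffOn ℝ 1 (fun p : ℝ × ℝ => lf p.1 p.2) (univ ×ˢ Ico (-ε) T) :=
      (contDiffOn_const.mul hw).add (contDiffOn_const.mul hz)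
    have hcD : ContDiffOn ℝ 1 (fun p : ℝ × ℝ => cf p.1 p.2) (univ ×ˢ Ico (-ε) T) :=
      (hw.sub hz).div_const 2
    have hlfper : ∀ θ s : ℝ, lf (θ + 2 * π) s = lf θ s := by
      intro θ s; simp only [hlfdef, hwper, hzper]
    obtain ⟨L, hL0, hLbd, hLlip⟩ :=
      exists_lipschitz_bound hlf hlfper (le_of_lt htlt) ht.2
    have hIccsub : Icc (-ε) t ⊆ Ico (-ε) T := fun s hs => ⟨hs.1, lt_of_le_of_lt hs.2 ht.2⟩
    have hepst : -ε ≤ t := le_of_lt htlt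
    -- the variational integral equation
    have inteq := flow_variational_eq hlf hΨ0 hΨflow hepst ht.2 hL0 hLbd hLlip hΨx x
    set J : ℝ → ℝ := fun s => pdx Ψ x s with hJdef
    set m : ℝ → ℝ := fun s => pdx lf (Ψ x s) s with hmdef
    set C : ℝ := exp (L * (t - -ε)) with hCdef
    have hC0 : 0 ≤ C := (exp_pos _).le
    have hΨxIcc : ∀ s ∈ Icc (-ε) t, DifferentiableAt ℝ (fun y => Ψ y s) x :=
      fun s hs => hΨx x s (hIccsub hs)
    have hcontΨ : ∀ y : ℝ, ContinuousOn (fun s => Ψ y s) (Icc (-ε) t) := fun y s hs =>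
      ((hΨflow y s (hIccsub hs)).differentiableWithinAt.continuousWithinAt).mono hIccsub
    have hcurvecont : ContinuousOn (fun s => ((Ψ x s, s) : ℝ × ℝ)) (Icc (-ε) t) :=
      (hcontΨ x).prodMk continuousOn_id
    have hcurvemaps : MapsTo (fun s => ((Ψ x s, s) : ℝ × ℝ)) (Icc (-ε) t)
        (univ ×ˢ Ico (-ε) T) := fun s hs => ⟨mem_univ _, hIccsub hs⟩
    have hmcont : ContinuousOn m (Icc (-ε) t) :=
      (pdx_continuousOn hlf).comp hcurvecont hcurvemaps
    have hJmeas : MeasureTheory.AEStronglyMeasurable J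
        (MeasureTheory.volume.restrict (Icc (-ε) t)) :=
      pdx_flow_measurable hcontΨ hΨxIcc
    have hJbd : ∀ s ∈ Icc (-ε) t, |J s| ≤ C :=
      fun s hs => pdx_flow_bound hΨ0 hΨflow hepst ht.2 hL0 hLlip
        (fun y s' hs' => hΨx y s' (hIccsub hs')) x s hs
    set h : ℝ → ℝ := fun s => m s * J s with hhdef
    have hhmeas : MeasureTheory.AEStronglyMeasurable h
        (MeasureTheory.volume.restrict (Icc (-ε) t)) :=
      (hmcont.aestronglyMeasurable measurableSet_Icc).mul hJmeas
    have hmbd : ∀ s ∈ Icc (-ε) t, |m s| ≤ L := fun s hs => hLbd _ s hs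
    have hhint : MeasureTheory.IntegrableOn h (Icc (-ε) t) := by
      apply MeasureTheory.Integrable.mono'
        (MeasureTheory.integrable_const (L * C)) hhmeas
      rw [MeasureTheory.ae_restrict_iff' measurableSet_Icc]
      apply Filter.Eventually.of_forall
      intro s hs
      rw [Real.norm_eq_abs, hhdef, abs_mul]
      exact mul_le_mul (hmbd s hs) (hJbd s hs) (abs_nonneg _) hL0
    have hintu : ∀ u ∈ Icc (-ε) t, IntervalIntegrable h MeasureTheory.volume (-ε) u := by
      intro u hu
      rw [intervalIntegrable_iff]
      apply hhint.mono_set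
      rw [uIoc_of_le hu.1]
      exact fun s hs => ⟨le_of_lt hs.1, le_trans hs.2 hu.2⟩
    set P : ℝ → ℝ := fun u => ∫ s in (-ε)..u, h s with hPdef
    have hPcont : ContinuousOn P (Icc (-ε) t) := by
      have h2 := intervalIntegral.continuousOn_primitive_interval
        (f := h) (μ := MeasureTheory.volume) (a := -ε) (b := t)
        (by rw [uIcc_of_le hepst]; exact hhint)
      rwa [uIcc_of_le hepst] at h2
    have hJeq : ∀ u ∈ Icc (-ε) t, J u = 1 + P u := inteq
    have hJcont : ContinuousOn J (Icc (-ε) t) :=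
      (continuousOn_const.add hPcont).congr hJeq
    have hhcont : ContinuousOn h (Icc (-ε) t) := hmcont.mul hJcont
    -- the sound speed along the flow
    set Cc : ℝ → ℝ := fun u => cf (Ψ x u) u with hCcdef
    have hCccont : ContinuousOn Cc (Icc (-ε) t) :=
      hcD.continuousOn.comp hcurvecont hcurvemaps
    have hCcpos : ∀ u ∈ Icc (-ε) t, 0 < Cc u := fun u hu =>
      hcpos (Ψ x u) u (hIccsub hu)
    set gf : ℝ → ℝ := fun s => (2 - 2 / (3 * φ)) * pdx z (Ψ x s) s
      - 8 * (1 - φ) / (3 * φ) * a (Ψ x s) s with hgfdef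
    have hgcont : ContinuousOn gf (Icc (-ε) t) := by
      apply ContinuousOn.sub
      · exact continuousOn_const.mul ((pdx_continuousOn hz).comp hcurvecont hcurvemaps)
      · exact continuousOn_const.mul (ha.continuousOn.comp hcurvecont hcurvemaps)
    have hgint : ∀ u ∈ Icc (-ε) t, IntervalIntegrable gf MeasureTheory.volume (-ε) u := by
      intro u hu
      rw [intervalIntegrable_iff]
      apply (hgcont.integrableOn_Icc).mono_set
      rw [uIoc_of_le hu.1]
      exact fun s hs => ⟨le_of_lt hs.1, le_trans hs.2 hu.2⟩
    set G : ℝ → ℝ := fun u => ∫ s in (-ε)..u, gf s with hGdef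
    have hGcont : ContinuousOn G (Icc (-ε) t) := by
      have h2 := intervalIntegral.continuousOn_primitive_interval
        (f := gf) (μ := MeasureTheory.volume) (a := -ε) (b := t)
        (by rw [uIcc_of_le hepst]; exact hgcont.integrableOn_Icc)
      rwa [uIcc_of_le hepst] at h2
    set α : ℝ := (1 - φ) / φ with hαdef
    set N : ℝ → ℝ := fun u => α * (Real.log (cf x (-ε)) - Real.log (Cc u)) + G u with hNdef
    have hNcont : ContinuousOn N (Icc (-ε) t) := by
      apply ContinuousOn.add _ hGcont
      apply continuousOn_const.mul
      apply ContinuousOn.sub continuousOn_const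
      exact hCccont.log fun u hu => ne_of_gt (hCcpos u hu)
    set D : ℝ → ℝ := fun u => J u * Real.exp (-N u) with hDdef
    have hDcont : ContinuousOn D (Icc (-ε) t) :=
      hJcont.mul (hNcont.neg.rexp)
    -- derivative of D vanishes on the open interval
    have hDder : ∀ u ∈ Ioo (-ε) t, HasDerivAt D 0 u := by
      intro u hu
      have huIcc : u ∈ Icc (-ε) t := ⟨le_of_lt hu.1, le_of_lt hu.2⟩
      have huIco : u ∈ Ico (-ε) T := hIccsub huIcc
      have huT : u < T := huIco.2
      have hunhds : Icc (-ε) t ∈ 𝓝 u := Icc_mem_nhds hu.1 hu.2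
      -- derivative of P
      have hPder : HasDerivAt P (h u) u :=
        intervalIntegral.integral_hasDerivAt_right (hintu u huIcc)
          ⟨Icc (-ε) t, hunhds, hhmeas⟩ (hhcont.continuousAt hunhds)
      have hJder : HasDerivAt J (m u * J u) u := by
        have h1 : HasDerivAt (fun u' => 1 + P u') (h u) u := by
          exact hPder.const_add 1
        have h2 : J =ᶠ[𝓝 u] fun u' => 1 + P u' :=
          Filter.eventuallyEq_of_mem hunhds fun u' hu' => hJeq u' hu'
        exact (h1.congr_of_eventuallyEq h2)
      have hGder : HasDerivAt G (gf u) u :=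
        intervalIntegral.integral_hasDerivAt_right (hgint u huIcc)
          ⟨Icc (-ε) t, hunhds, hgcont.aestronglyMeasurable measurableSet_Icc⟩
          (hgcont.continuousAt hunhds)
      -- curve derivative
      have hγ : HasDerivAt (fun s => Ψ x s) (lf (Ψ x u) u) u :=
        (hΨflow x u huIco).hasDerivAt (Ico_mem_nhds hu.1 huT)
      have hCcder : HasDerivAt Cc
          (lf (Ψ x u) u * pdx cf (Ψ x u) u + pdt cf (Ψ x u) u) u :=
        hasDerivAt_comp_curve hcD ⟨hu.1, huT⟩ hγ
      have hCcu : Cc u ≠ 0 := ne_of_gt (hCcpos u huIcc)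
      have hlogder : HasDerivAt (fun u' => Real.log (Cc u'))
          ((lf (Ψ x u) u * pdx cf (Ψ x u) u + pdt cf (Ψ x u) u) / Cc u) u :=
        hCcder.log hCcu
      have hNder : HasDerivAt N
          (α * (0 - (lf (Ψ x u) u * pdx cf (Ψ x u) u + pdt cf (Ψ x u) u) / Cc u) + gf u)
          u := (((hasDerivAt_const u (Real.log (cf x (-ε)))).sub hlogder).const_mul α).add hGder
      -- the PDE identity: N' = m
      have hkey : α * (0 - (lf (Ψ x u) u * pdx cf (Ψ x u) u + pdt cf (Ψ x u) u) / Cc u)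
          + gf u = m u := by
        set θ : ℝ := Ψ x u with hθdef
        -- spatial derivatives as plain derivatives
        have hWx := hasDerivAt_slice_x hw huIco (θ := θ)
        have hW' : HasDerivAt (fun y => w y u) (pdx w θ u) θ := by
          rw [pdx, hWx.deriv]; exact hWx
        have hZx := hasDerivAt_slice_x hz huIco (θ := θ)
        have hZ' : HasDerivAt (fun y => z y u) (pdx z θ u) θ := by
          rw [pdx, hZx.deriv]; exact hZx
        have hmval : m u = (1 - φ) * pdx w θ u + (1 / 3 + φ) * pdx z θ u := by
          rw [hmdef, pdx]
          exact ((hW'.const_mul (1 - φ)).add (hZ'.const_mul (1 / 3 + φ))).deriv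
        have hcx : pdx cf θ u = (pdx w θ u - pdx z θ u) / 2 := by
          rw [pdx]
          exact ((hW'.sub hZ').div_const 2).deriv
        have hWt : HasDerivAt (fun τ => w θ τ) (pdt w θ u) u :=
          hasDerivAt_pdt hw ⟨hu.1, huT⟩
        have hZt : HasDerivAt (fun τ => z θ τ) (pdt z θ u) u :=
          hasDerivAt_pdt hz ⟨hu.1, huT⟩
        have hct : pdt cf θ u = (pdt w θ u - pdt z θ u) / 2 := by
          rw [pdt]
          exact ((hWt.sub hZt).div_const 2).deriv
        obtain ⟨hEw, hEz, -, -⟩ := heuler θ u huIco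
        rw [lam3] at hEw
        rw [lam1] at hEz
        have hwz : w θ u - z θ u ≠ 0 := by
          have := hcpos θ u huIco
          intro hcontra
          rw [hcontra] at this
          norm_num at this
        have hCcval : Cc u = (w θ u - z θ u) / 2 := rfl
        rw [hmval, hcx, hct, hCcval, hgfdef, hαdef]
        have hwt : pdt w θ u = -(w θ u + z θ u / 3) * pdx w θ u
            - 8 / 3 * a θ u * w θ u + 1 / 24 * (w θ u - z θ u) ^ 2 * pdx k θ u := by
          linarith [hEw]
        have hzt : pdt z θ u = -(w θ u / 3 + z θ u) * pdx z θ u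
            - 8 / 3 * a θ u * z θ u + 1 / 24 * (w θ u - z θ u) ^ 2 * pdx k θ u := by
          linarith [hEz]
        rw [hwt, hzt, hlfdef]
        have hθx : (fun θ s => (1 - φ) * w θ s + (1 / 3 + φ) * z θ s) θ u
            = (1 - φ) * w θ u + (1 / 3 + φ) * z θ u := rfl
        field_simp
        ring
      rw [hkey] at hNder
      have hD : HasDerivAt D
          (m u * J u * Real.exp (-N u) + J u * (Real.exp (-N u) * -(m u))) u :=
        hJder.mul ((hNder.neg).exp)
      have : m u * J u * Real.exp (-N u) + J u * (Real.exp (-N u) * -(m u)) = 0 := by ring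
      rwa [this] at hD
    -- constancy of D
    have hconst : ∀ s₀ ∈ Ioo (-ε) t, D t = D s₀ := by
      intro s₀ hs₀
      have hder : ∀ u ∈ Ico s₀ t, HasDerivWithinAt D 0 (Ici u) u := fun u hu =>
        (hDder u ⟨lt_of_lt_of_le hs₀.1 hu.1, hu.2⟩).hasDerivWithinAt
      exact constant_of_has_deriv_right_zero
        (hDcont.mono (Icc_subset_Icc (le_of_lt hs₀.1) le_rfl)) hder t
        (right_mem_Icc.2 (le_of_lt hs₀.2))
    haveI hNB : (𝓝[Ioo (-ε) t] (-ε)).NeBot := by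
      apply mem_closure_iff_nhdsWithin_neBot.1
      rw [closure_Ioo (ne_of_lt htlt)]
      exact left_mem_Icc.2 hepst
    have h1 : Filter.Tendsto D (𝓝[Ioo (-ε) t] (-ε)) (𝓝 (D (-ε))) := by
      have := (hDcont (-ε) (left_mem_Icc.2 hepst)).tendsto
      exact this.mono_left (nhdsWithin_mono _ Ioo_subset_Icc_self)
    have h2 : Filter.Tendsto D (𝓝[Ioo (-ε) t] (-ε)) (𝓝 (D t)) := by
      apply Filter.Tendsto.congr' _ tendsto_const_nhds
      filter_upwards [self_mem_nhdsWithin] with u hu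
      exact hconst u hu
    have hDeq : D (-ε) = D t := tendsto_nhds_unique h1 h2
    have hN0 : N (-ε) = 0 := by
      have hGz : G (-ε) = 0 := intervalIntegral.integral_same
      have hCcz : Cc (-ε) = cf x (-ε) := by
        show cf (Ψ x (-ε)) (-ε) = cf x (-ε)
        rw [hΨ0 x]
      show α * (Real.log (cf x (-ε)) - Real.log (Cc (-ε))) + G (-ε) = 0
      rw [hGz, hCcz, sub_self, mul_zero, add_zero]
    have hD0 : D (-ε) = 1 := by
      rw [hDdef]
      simp only [hN0, neg_zero, Real.exp_zero, mul_one]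
      exact hpdxΨ0
    have hJt : J t = Real.exp (N t) := by
      have h3 : J t * Real.exp (-N t) = 1 := by
        have h4 : D t = 1 := hDeq ▸ hD0
        exact h4
      rw [Real.exp_neg] at h3
      exact (mul_inv_eq_one₀ (Real.exp_ne_zero _)).1 h3
    -- final algebra
    have hCt : 0 < Cc t := hCcpos t (right_mem_Icc.2 hepst)
    have hbasepos : 0 < cf x (-ε) / Cc t := div_pos hc0pos hCt
    calc pdx Ψ x t = Real.exp (N t) := hJt
      _ = (cf x (-ε) / Cc t) ^ α * Real.exp (G t) := by
          rw [Real.rpow_def_of_pos hbasepos, ← Real.exp_add]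
          congr 1
          rw [Real.log_div (ne_of_gt hc0pos) (ne_of_gt hCt)]
          ring
      _ = _ := rfl
end
end

section
/- Let (w, z, k, a) be a C² solution of the azimuthal Euler system on 𝕋 × [−ε, T) with c > 0, whose entropy data is k₀ := k(·,−ε), and let ϕ be the 2-characteristic flow, assumed C² in x. Define Φ(x,t) := 2 c₀'(x)/c₀(x) − (16/3) ∫_{−ε}^{t} ∂_x( a(ϕ(x,τ),τ) ) dτ. Then for all (x, t): (i) k(ϕ(x,t), t) = k₀(x); (ii) ϕ_x(x,t) · ∂_θk(ϕ(x,t), t) = k₀'(x); (iii) ϕ_{xx} = ϕ_x Φ − 2 ϕ_x² ((c^{−1}∂_θc)∘ϕ); and (iv) ϕ_x² · (∂²_θk∘ϕ) = k₀'' − Φ k₀' + 2 ϕ_x² ((c^{−1}∂_θc · ∂_θk)∘ϕ); equivalently, the quantity 𝓔 := ∂²_θk − 2 c^{−1}∂_θc ∂_θk satisfies 𝓔(ϕ(x,t), t) = ϕ_x(x,t)^{−2} ( k₀''(x) − Φ(x,t) k₀'(x) ). -/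
open Real Set

open MeasureTheory
open scoped Interval

noncomputable section

namespace EntropyAux

theorem hasDerivAt_slice_x {F : ℝ → ℝ → ℝ} {J : Set ℝ} {θ s : ℝ}
    (hF : DifferentiableWithinAt ℝ (fun p : ℝ × ℝ => F p.1 p.2) (univ ×ˢ J) (θ, s))
    (hs : s ∈ J) :
    HasDerivAt (fun y => F y s)
      (fderivWithin ℝ (fun p : ℝ × ℝ => F p.1 p.2) (univ ×ˢ J) (θ, s) (1, 0)) θ := by
  have h1 : HasDerivAt (fun y : ℝ => (y, s)) ((1:ℝ), (0:ℝ)) θ :=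
    (hasDerivAt_id θ).prodMk (hasDerivAt_const θ s)
  have hmaps : MapsTo (fun y : ℝ => (y, s)) (univ : Set ℝ) (univ ×ˢ J) :=
    fun y _ => ⟨mem_univ y, hs⟩
  have := hF.hasFDerivWithinAt.comp_hasDerivWithinAt θ
    (h1.hasDerivWithinAt (s := univ)) hmaps
  rw [← hasDerivWithinAt_univ]
  exact this

theorem pdx_eq_fderivWithin {F : ℝ → ℝ → ℝ} {J : Set ℝ} {θ s : ℝ}
    (hF : DifferentiableWithinAt ℝ (fun p : ℝ × ℝ => F p.1 p.2) (univ ×ˢ J) (θ, s))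
    (hs : s ∈ J) :
    pdx F θ s = fderivWithin ℝ (fun p : ℝ × ℝ => F p.1 p.2) (univ ×ˢ J) (θ, s) (1, 0) :=
  (hasDerivAt_slice_x hF hs).deriv

theorem hasDerivAt_slice_x' {F : ℝ → ℝ → ℝ} {θ s : ℝ}
    (hF : DifferentiableAt ℝ (fun p : ℝ × ℝ => F p.1 p.2) (θ, s)) :
    HasDerivAt (fun y => F y s)
      (fderiv ℝ (fun p : ℝ × ℝ => F p.1 p.2) (θ, s) (1, 0)) θ := by
  have h1 : HasDerivAt (fun y : ℝ => (y, s)) ((1:ℝ), (0:ℝ)) θ :=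
    (hasDerivAt_id θ).prodMk (hasDerivAt_const θ s)
  exact hF.hasFDerivAt.comp_hasDerivAt θ h1

theorem hasDerivAt_slice_t' {F : ℝ → ℝ → ℝ} {θ s : ℝ}
    (hF : DifferentiableAt ℝ (fun p : ℝ × ℝ => F p.1 p.2) (θ, s)) :
    HasDerivAt (fun r => F θ r)
      (fderiv ℝ (fun p : ℝ × ℝ => F p.1 p.2) (θ, s) (0, 1)) s := by
  have h1 : HasDerivAt (fun r : ℝ => (θ, r)) ((0:ℝ), (1:ℝ)) s :=
    (hasDerivAt_const s θ).prodMk (hasDerivAt_id s)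
  exact hF.hasFDerivAt.comp_hasDerivAt s h1

theorem hasDerivAt_comp_curve {F : ℝ → ℝ → ℝ} {γ : ℝ → ℝ} {v t : ℝ}
    (hF : DifferentiableAt ℝ (fun p : ℝ × ℝ => F p.1 p.2) (γ t, t))
    (hγ : HasDerivAt γ v t) :
    HasDerivAt (fun s => F (γ s) s) (v * pdx F (γ t) t + pdt F (γ t) t) t := by
  have h1 : HasDerivAt (fun s : ℝ => (γ s, s)) ((v:ℝ), (1:ℝ)) t :=
    hγ.prodMk (hasDerivAt_id t)
  have h2 : HasDerivAt ((fun p : ℝ × ℝ => F p.1 p.2) ∘ (fun s => (γ s, s)))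
      (fderiv ℝ (fun p : ℝ × ℝ => F p.1 p.2) (γ t, t) ((v:ℝ), (1:ℝ))) t :=
    HasFDerivAt.comp_hasDerivAt t hF.hasFDerivAt h1
  have hx : pdx F (γ t) t = fderiv ℝ (fun p : ℝ × ℝ => F p.1 p.2) (γ t, t) (1, 0) :=
    (hasDerivAt_slice_x' hF).deriv
  have ht : pdt F (γ t) t = fderiv ℝ (fun p : ℝ × ℝ => F p.1 p.2) (γ t, t) (0, 1) :=
    (hasDerivAt_slice_t' hF).deriv
  have hv : ((v:ℝ), (1:ℝ)) = v • ((1:ℝ), (0:ℝ)) + ((0:ℝ), (1:ℝ)) := by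
    simp [Prod.ext_iff]
  rw [hx, ht]
  convert h2 using 1
  · rfl
  rw [hv, map_add, ContinuousLinearMap.map_smul]
  simp [smul_eq_mul]

theorem contDiffOn_pdx {F : ℝ → ℝ → ℝ} {J : Set ℝ}
    (hJ : UniqueDiffOn ℝ (J : Set ℝ))
    (hF : ContDiffOn ℝ 2 (fun p : ℝ × ℝ => F p.1 p.2) (univ ×ˢ J)) :
    ContDiffOn ℝ 1 (fun p : ℝ × ℝ => pdx F p.1 p.2) (univ ×ˢ J) := by
  have hS : UniqueDiffOn ℝ ((univ : Set ℝ) ×ˢ J) := uniqueDiffOn_univ.prod hJ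
  have h1 : ContDiffOn ℝ 1
      (fderivWithin ℝ (fun p : ℝ × ℝ => F p.1 p.2) (univ ×ˢ J)) (univ ×ˢ J) :=
    hF.fderivWithin hS (by norm_num)
  have h2 : ContDiffOn ℝ 1
      (fun p : ℝ × ℝ => fderivWithin ℝ (fun p : ℝ × ℝ => F p.1 p.2) (univ ×ˢ J) p ((1:ℝ), (0:ℝ)))
      (univ ×ˢ J) := h1.clm_apply contDiffOn_const
  exact h2.congr (fun p hp =>
    pdx_eq_fderivWithin (hF.differentiableOn (by norm_num) p hp) hp.2)

theorem schwarz_slice {F : ℝ → ℝ → ℝ} {α β : ℝ}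
    (hF : ContDiffOn ℝ 2 (fun p : ℝ × ℝ => F p.1 p.2) (univ ×ˢ Ioo α β))
    {θ s : ℝ} (hs : s ∈ Ioo α β) :
    HasDerivAt (fun y => pdt F y s)
      (fderiv ℝ (fun p : ℝ × ℝ => pdx F p.1 p.2) (θ, s) (0, 1)) θ := by
  set U : Set (ℝ × ℝ) := univ ×ˢ Ioo α β with hUdef
  have hU : IsOpen U := isOpen_univ.prod isOpen_Ioo
  have hpU : ∀ y : ℝ, (y, s) ∈ U := fun y => ⟨mem_univ y, hs⟩
  set Fu : ℝ × ℝ → ℝ := fun p => F p.1 p.2 with hFu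
  have hdiffU : ∀ p ∈ U, DifferentiableAt ℝ Fu p := fun p hp =>
    ((hF.differentiableOn (by norm_num)) p hp).differentiableAt (hU.mem_nhds hp)
  have hD1 : ContDiffOn ℝ 1 (fderiv ℝ Fu) U := hF.fderiv_of_isOpen hU (by norm_num)
  have hD1at : DifferentiableAt ℝ (fderiv ℝ Fu) (θ, s) :=
    ((hD1.differentiableOn (by norm_num)) (θ, s) (hpU θ)).differentiableAt
      (hU.mem_nhds (hpU θ))
  set f'' := fderiv ℝ (fderiv ℝ Fu) (θ, s) with hf''
  have hsymm : ∀ u v : ℝ × ℝ, f'' u v = f'' v u := by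
    intro u v
    refine second_derivative_symmetric_of_eventually (f := Fu) ?_ hD1at.hasFDerivAt u v
    filter_upwards [hU.mem_nhds (hpU θ)] with p hp using (hdiffU p hp).hasFDerivAt
  -- LHS function equals y ↦ fderiv Fu (y,s) (0,1)
  have heq : (fun y => pdt F y s) = fun y => fderiv ℝ Fu (y, s) (0, 1) := by
    funext y
    exact (hasDerivAt_slice_t' (hdiffU _ (hpU y))).deriv
  -- derivative of that
  have h1 : HasDerivAt (fun y : ℝ => (y, s)) ((1:ℝ), (0:ℝ)) θ :=
    (hasDerivAt_id θ).prodMk (hasDerivAt_const θ s)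
  have h2 : HasDerivAt ((fderiv ℝ Fu) ∘ (fun y => (y, s))) (f'' ((1:ℝ), (0:ℝ))) θ :=
    HasFDerivAt.comp_hasDerivAt θ hD1at.hasFDerivAt h1
  have h3 : HasDerivAt (fun y => fderiv ℝ Fu (y, s) ((0:ℝ), (1:ℝ)))
      (f'' ((1:ℝ), (0:ℝ)) ((0:ℝ), (1:ℝ))) θ := by
    have := h2.clm_apply (hasDerivAt_const θ ((0:ℝ), (1:ℝ)))
    simpa using this
  -- RHS value equals f'' (0,1) (1,0) = f'' (1,0) (0,1)
  have heq2 : (fun p : ℝ × ℝ => pdx F p.1 p.2) =ᶠ[nhds (θ, s)] fun p => fderiv ℝ Fu p (1, 0) := by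
    filter_upwards [hU.mem_nhds (hpU θ)] with p hp
    exact (hasDerivAt_slice_x' (hdiffU p hp)).deriv
  have h4 : HasFDerivAt (fun p => fderiv ℝ Fu p ((1:ℝ), (0:ℝ)))
      ((ContinuousLinearMap.apply ℝ ℝ ((1:ℝ), (0:ℝ))).comp f'') (θ, s) :=
    (ContinuousLinearMap.apply ℝ ℝ ((1:ℝ), (0:ℝ))).hasFDerivAt.comp _ hD1at.hasFDerivAt
  have h5 : fderiv ℝ (fun p : ℝ × ℝ => pdx F p.1 p.2) (θ, s) (0, 1)
      = f'' ((0:ℝ), (1:ℝ)) ((1:ℝ), (0:ℝ)) := by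
    rw [heq2.fderiv_eq, h4.fderiv]
    rfl
  rw [h5, hsymm, heq]
  exact h3

theorem const_of_hasDerivAt_zero {f : ℝ → ℝ} {A b : ℝ}
    (hc : ContinuousOn f (Icc A b)) (hd : ∀ s ∈ Ioo A b, HasDerivAt f 0 s) :
    ∀ s ∈ Icc A b, f s = f A := by
  intro s hs
  have hdiff : DifferentiableOn ℝ f (interior (Icc A b)) := by
    rw [interior_Icc]; exact fun y hy => (hd y hy).differentiableAt.differentiableWithinAt
  have hmono : MonotoneOn f (Icc A b) := by
    apply monotoneOn_of_deriv_nonneg (convex_Icc A b) hc hdiff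
    intro y hy
    rw [interior_Icc] at hy
    rw [(hd y hy).deriv]
  have hanti : AntitoneOn f (Icc A b) := by
    have : MonotoneOn (fun s => -f s) (Icc A b) := by
      apply monotoneOn_of_deriv_nonneg (convex_Icc A b) hc.neg
      · rw [interior_Icc]; exact fun y hy => ((hd y hy).neg).differentiableAt.differentiableWithinAt
      · intro y hy
        rw [interior_Icc] at hy
        rw [((hd y hy).neg).deriv]; norm_num
    intro u hu v hv huv
    have := this hu hv huv
    simpa using this
  have hA : A ∈ Icc A b := ⟨le_refl A, hs.1.trans hs.2⟩
  exact le_antisymm (hanti hA hs hs.1) (hmono hA hs hs.1)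

theorem abs_deriv_le_of_lip {f : ℝ → ℝ} {B x d : ℝ} (hB : 0 ≤ B)
    (hf : HasDerivAt f d x) (hlip : ∀ y, |f y - f x| ≤ B * |y - x|) : |d| ≤ B := by
  have htend := hasDerivAt_iff_tendsto_slope.mp hf
  have hev : ∀ᶠ y in nhdsWithin x {x}ᶜ, |slope f x y| ≤ B := by
    filter_upwards [self_mem_nhdsWithin] with y hy
    have hyx : y - x ≠ 0 := sub_ne_zero.mpr hy
    rw [slope_def_field, div_eq_inv_mul]
    rw [abs_mul, abs_inv]
    rw [inv_mul_le_iff₀ (abs_pos.mpr hyx)]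
    calc |f y - f x| ≤ B * |y - x| := hlip y
    _ = |y - x| * B := mul_comm _ _
  have : Filter.Tendsto (fun y => |slope f x y|) (nhdsWithin x {x}ᶜ) (nhds |d|) :=
    htend.abs
  exact le_of_tendsto this hev

theorem pdx_periodic {f : ℝ → ℝ → ℝ} (hper : ∀ θ s : ℝ, f (θ + 2 * π) s = f θ s) :
    ∀ θ s : ℝ, pdx f (θ + 2 * π) s = pdx f θ s := by
  intro θ s
  have h1 : (fun y => f y s) = fun y => f (y + 2 * π) s := by
    funext y; rw [hper]
  show deriv (fun y => f y s) (θ + 2 * π) = deriv (fun y => f y s) θ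
  conv_rhs => rw [h1]
  exact (deriv_comp_add_const (fun u => f u s) (2 * π) θ).symm

theorem bound_of_periodic {G : ℝ → ℝ → ℝ} {I' J : Set ℝ} (hI : IsCompact I') (hIJ : I' ⊆ J)
    (hcont : ContinuousOn (fun p : ℝ × ℝ => G p.1 p.2) (univ ×ˢ J))
    (hper : ∀ θ s : ℝ, G (θ + 2 * π) s = G θ s) :
    ∃ M : ℝ, 0 ≤ M ∧ ∀ θ : ℝ, ∀ s ∈ I', |G θ s| ≤ M := by
  have hK : IsCompact ((Icc 0 (2 * π)) ×ˢ I') := (isCompact_Icc).prod hI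
  have hcont' : ContinuousOn (fun p : ℝ × ℝ => G p.1 p.2) ((Icc 0 (2 * π)) ×ˢ I') :=
    hcont.mono (fun p hp => ⟨mem_univ _, hIJ hp.2⟩)
  obtain ⟨C, hC⟩ := hK.exists_bound_of_continuousOn hcont'
  refine ⟨max C 0, le_max_right _ _, ?_⟩
  intro θ s hs
  have hp : Function.Periodic (fun θ => G θ s) (2 * π) := fun θ => hper θ s
  obtain ⟨y, hy, hxy⟩ := hp.exists_mem_Ico₀ Real.two_pi_pos θ
  rw [hxy]
  calc |G y s| = ‖(fun p : ℝ × ℝ => G p.1 p.2) (y, s)‖ := rfl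
    _ ≤ C := hC (y, s) ⟨Ico_subset_Icc_self hy, hs⟩
    _ ≤ max C 0 := le_max_left _ _

theorem hasDerivAt_pdx {F : ℝ → ℝ → ℝ} {J : Set ℝ} {θ s : ℝ}
    (hF : DifferentiableWithinAt ℝ (fun p : ℝ × ℝ => F p.1 p.2) (univ ×ˢ J) (θ, s))
    (hs : s ∈ J) :
    HasDerivAt (fun y => F y s) (pdx F θ s) θ := by
  have h := hasDerivAt_slice_x hF hs
  have hd : pdx F θ s = fderivWithin ℝ (fun p : ℝ × ℝ => F p.1 p.2) (univ ×ˢ J) (θ, s) (1, 0) :=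
    h.deriv
  rw [hd]; exact h

theorem hasDerivAt_pdt' {F : ℝ → ℝ → ℝ} {θ s : ℝ}
    (hF : DifferentiableAt ℝ (fun p : ℝ × ℝ => F p.1 p.2) (θ, s)) :
    HasDerivAt (fun r => F θ r) (pdt F θ s) s := by
  have h := hasDerivAt_slice_t' hF
  have hd : pdt F θ s = fderiv ℝ (fun p : ℝ × ℝ => F p.1 p.2) (θ, s) (0, 1) := h.deriv
  rw [hd]; exact h

theorem continuousOn_pdx_one {F : ℝ → ℝ → ℝ} {J : Set ℝ}
    (hJ : UniqueDiffOn ℝ (J : Set ℝ))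
    (hF : ContDiffOn ℝ 1 (fun p : ℝ × ℝ => F p.1 p.2) (univ ×ˢ J)) :
    ContinuousOn (fun p : ℝ × ℝ => pdx F p.1 p.2) (univ ×ˢ J) := by
  have hS : UniqueDiffOn ℝ ((univ : Set ℝ) ×ˢ J) := uniqueDiffOn_univ.prod hJ
  have h1 : ContinuousOn
      (fderivWithin ℝ (fun p : ℝ × ℝ => F p.1 p.2) (univ ×ˢ J)) (univ ×ˢ J) :=
    hF.continuousOn_fderivWithin hS (le_refl _)
  have h2 : ContinuousOn
      (fun p : ℝ × ℝ => fderivWithin ℝ (fun p : ℝ × ℝ => F p.1 p.2) (univ ×ˢ J) p ((1:ℝ), (0:ℝ)))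
      (univ ×ˢ J) := h1.clm_apply continuousOn_const
  refine ContinuousOn.congr h2 (fun p hp => ?_)
  have h := hasDerivAt_slice_x (hF.differentiableOn one_ne_zero p hp) hp.2
  exact h.deriv

end EntropyAux

open EntropyAux

/-- Transport of the entropy and its derivatives along the
2-characteristics. -/
theorem entropy_along_two_characteristics
    (ε T : ℝ) (hT : -ε < T)
    (w z k a : ℝ → ℝ → ℝ)
    (hw : ContDiffOn ℝ 2 (fun p : ℝ × ℝ => w p.1 p.2) (univ ×ˢ Ico (-ε) T))
    (hz : ContDiffOn ℝ 2 (fun p : ℝ × ℝ => z p.1 p.2) (univ ×ˢ Ico (-ε) T))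
    (hk : ContDiffOn ℝ 2 (fun p : ℝ × ℝ => k p.1 p.2) (univ ×ˢ Ico (-ε) T))
    (ha : ContDiffOn ℝ 2 (fun p : ℝ × ℝ => a p.1 p.2) (univ ×ˢ Ico (-ε) T))
    (hwper : ∀ θ t : ℝ, w (θ + 2 * π) t = w θ t)
    (hzper : ∀ θ t : ℝ, z (θ + 2 * π) t = z θ t)
    (hkper : ∀ θ t : ℝ, k (θ + 2 * π) t = k θ t)
    (haper : ∀ θ t : ℝ, a (θ + 2 * π) t = a θ t)
    (heuler : ∀ θ : ℝ, ∀ t ∈ Ico (-ε) T, EulerEq w z k a θ t)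
    (c : ℝ → ℝ → ℝ) (hc : ∀ θ t : ℝ, c θ t = (w θ t - z θ t) / 2)
    (hcpos : ∀ θ : ℝ, ∀ t ∈ Ico (-ε) T, 0 < c θ t)
    (k₀ : ℝ → ℝ) (hk₀ : ∀ x : ℝ, k₀ x = k x (-ε))
    (ϕ : ℝ → ℝ → ℝ)
    (hϕ : IsFlowOn (fun θ t => lam2 (w θ t) (z θ t)) ϕ ε (Ico (-ε) T))
    (hϕx : ∀ t ∈ Ico (-ε) T, ContDiff ℝ 2 (fun y => ϕ y t))
    (Φ : ℝ → ℝ → ℝ)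
    (hΦ : ∀ x t : ℝ,
      Φ x t = 2 * deriv (fun y => c y (-ε)) x / c x (-ε)
        - 16 / 3 * ∫ τ in (-ε)..t, pdx (fun y s => a (ϕ y s) s) x τ)
    (E : ℝ → ℝ → ℝ)
    (hE : ∀ θ t : ℝ, E θ t
      = pdx (fun θ' t' => pdx k θ' t') θ t - 2 * (c θ t)⁻¹ * pdx c θ t * pdx k θ t) :
    ∀ x : ℝ, ∀ t ∈ Ico (-ε) T,
      -- (i) entropy is transported
      (k (ϕ x t) t = k₀ x) ∧
      -- (ii) first derivative
      (pdx ϕ x t * pdx k (ϕ x t) t = deriv k₀ x) ∧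
      -- (iii) second spatial derivative of the flow
      (pdx (fun y s => pdx ϕ y s) x t
        = pdx ϕ x t * Φ x t
          - 2 * (pdx ϕ x t) ^ 2 * ((c (ϕ x t) t)⁻¹ * pdx c (ϕ x t) t)) ∧
      -- (iv) second derivative of the entropy
      ((pdx ϕ x t) ^ 2 * pdx (fun θ' t' => pdx k θ' t') (ϕ x t) t
        = iteratedDeriv 2 k₀ x - Φ x t * deriv k₀ x
          + 2 * (pdx ϕ x t) ^ 2
              * ((c (ϕ x t) t)⁻¹ * pdx c (ϕ x t) t * pdx k (ϕ x t) t)) ∧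
      -- (iv') equivalently, in terms of `𝓔 = ∂²_θk − 2c⁻¹∂_θc ∂_θk`
      (E (ϕ x t) t = (pdx ϕ x t)⁻¹ ^ 2 * (iteratedDeriv 2 k₀ x - Φ x t * deriv k₀ x)) := by
  classical
  intro x t ht
  obtain ⟨hϕ0, hϕode⟩ := hϕ
  have hεJ : (-ε) ∈ Ico (-ε) T := ⟨le_refl _, hT⟩
  have hεt : -ε ≤ t := ht.1
  have htT : t < T := ht.2
  have hIJ : Icc (-ε) t ⊆ Ico (-ε) T := fun s hs => ⟨hs.1, lt_of_le_of_lt hs.2 htT⟩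
  have hIooJ : Ioo (-ε) t ⊆ Ioo (-ε) T := Ioo_subset_Ioo (le_refl _) (le_of_lt htT)
  have hJ : UniqueDiffOn ℝ (Ico (-ε) T) := uniqueDiffOn_Ico _ _
  have hJoo : UniqueDiffOn ℝ (Ioo (-ε) T) := uniqueDiffOn_Ioo _ _
  have hJooJ : (univ ×ˢ Ioo (-ε) T : Set (ℝ × ℝ)) ⊆ univ ×ˢ Ico (-ε) T :=
    prod_mono_right Ioo_subset_Ico_self
  set lam : ℝ → ℝ → ℝ := fun θ s => lam2 (w θ s) (z θ s) with hlamdef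
  have hlamC : ContDiffOn ℝ 2 (fun p : ℝ × ℝ => lam p.1 p.2) (univ ×ˢ Ico (-ε) T) := by
    have h1 : (fun p : ℝ × ℝ => lam p.1 p.2)
        = fun p : ℝ × ℝ => 2 / 3 * (w p.1 p.2 + z p.1 p.2) := rfl
    rw [h1]
    exact contDiffOn_const.mul (hw.add hz)
  have hlamper : ∀ θ s : ℝ, lam (θ + 2 * π) s = lam θ s := by
    intro θ s
    show lam2 (w (θ + 2*π) s) (z (θ + 2*π) s) = lam2 (w θ s) (z θ s)
    rw [hwper, hzper]
  have hcC : ContDiffOn ℝ 2 (fun p : ℝ × ℝ => c p.1 p.2) (univ ×ˢ Ico (-ε) T) := by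
    have hfun : (fun p : ℝ × ℝ => c p.1 p.2)
        = fun p : ℝ × ℝ => (w p.1 p.2 - z p.1 p.2) / 2 := funext fun p => hc _ _
    rw [hfun]
    exact (hw.sub hz).div_const 2
  -- interior regularity
  have hUopen : IsOpen ((univ : Set ℝ) ×ˢ Ioo (-ε) T) := isOpen_univ.prod isOpen_Ioo
  have hwU : ContDiffOn ℝ 2 (fun p : ℝ × ℝ => w p.1 p.2) (univ ×ˢ Ioo (-ε) T) := hw.mono hJooJ
  have hzU : ContDiffOn ℝ 2 (fun p : ℝ × ℝ => z p.1 p.2) (univ ×ˢ Ioo (-ε) T) := hz.mono hJooJ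
  have hkU : ContDiffOn ℝ 2 (fun p : ℝ × ℝ => k p.1 p.2) (univ ×ˢ Ioo (-ε) T) := hk.mono hJooJ
  have haU : ContDiffOn ℝ 2 (fun p : ℝ × ℝ => a p.1 p.2) (univ ×ˢ Ioo (-ε) T) := ha.mono hJooJ
  have hcU : ContDiffOn ℝ 2 (fun p : ℝ × ℝ => c p.1 p.2) (univ ×ˢ Ioo (-ε) T) := hcC.mono hJooJ
  have hlamU : ContDiffOn ℝ 2 (fun p : ℝ × ℝ => lam p.1 p.2) (univ ×ˢ Ioo (-ε) T) :=
    hlamC.mono hJooJ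
  have hdiffAt : ∀ (F : ℝ → ℝ → ℝ),
      ContDiffOn ℝ 2 (fun p : ℝ × ℝ => F p.1 p.2) (univ ×ˢ Ioo (-ε) T) →
      ∀ (θ : ℝ), ∀ s ∈ Ioo (-ε) T,
        DifferentiableAt ℝ (fun p : ℝ × ℝ => F p.1 p.2) (θ, s) := by
    intro F hF θ s hs
    exact ((hF.differentiableOn (by norm_num)) (θ, s) ⟨mem_univ _, hs⟩).differentiableAt
      (hUopen.mem_nhds ⟨mem_univ _, hs⟩)
  have hdiffAtPdx : ∀ (F : ℝ → ℝ → ℝ),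
      ContDiffOn ℝ 2 (fun p : ℝ × ℝ => F p.1 p.2) (univ ×ˢ Ioo (-ε) T) →
      ∀ (θ : ℝ), ∀ s ∈ Ioo (-ε) T,
        DifferentiableAt ℝ (fun p : ℝ × ℝ => pdx F p.1 p.2) (θ, s) := by
    intro F hF θ s hs
    exact (((contDiffOn_pdx hJoo hF).differentiableOn one_ne_zero) (θ, s)
      ⟨mem_univ _, hs⟩).differentiableAt (hUopen.mem_nhds ⟨mem_univ _, hs⟩)
  have hdW : ∀ (F : ℝ → ℝ → ℝ),
      ContDiffOn ℝ 2 (fun p : ℝ × ℝ => F p.1 p.2) (univ ×ˢ Ico (-ε) T) →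
      ∀ (θ : ℝ), ∀ s ∈ Ico (-ε) T,
        DifferentiableWithinAt ℝ (fun p : ℝ × ℝ => F p.1 p.2) (univ ×ˢ Ico (-ε) T) (θ, s) :=
    fun F hF θ s hs => (hF.differentiableOn (by norm_num)) (θ, s) ⟨mem_univ _, hs⟩
  have hdWPdx : ∀ (F : ℝ → ℝ → ℝ),
      ContDiffOn ℝ 2 (fun p : ℝ × ℝ => F p.1 p.2) (univ ×ˢ Ico (-ε) T) →
      ∀ (θ : ℝ), ∀ s ∈ Ico (-ε) T,
        DifferentiableWithinAt ℝ (fun p : ℝ × ℝ => pdx F p.1 p.2) (univ ×ˢ Ico (-ε) T) (θ, s) :=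
    fun F hF θ s hs =>
      ((contDiffOn_pdx hJ hF).differentiableOn one_ne_zero) (θ, s) ⟨mem_univ _, hs⟩
  -- uniform bounds from periodicity
  obtain ⟨Kb, hKb0, hKb⟩ : ∃ M : ℝ, 0 ≤ M ∧ ∀ (θ : ℝ), ∀ s ∈ Icc (-ε) t, |pdx lam θ s| ≤ M :=
    bound_of_periodic isCompact_Icc hIJ
      (continuousOn_pdx_one hJ (hlamC.of_le (by norm_num))) (pdx_periodic hlamper)
  obtain ⟨K2b, hK2b0, hK2b⟩ :
      ∃ M : ℝ, 0 ≤ M ∧ ∀ (θ : ℝ), ∀ s ∈ Icc (-ε) t, |pdx (pdx lam) θ s| ≤ M :=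
    bound_of_periodic isCompact_Icc hIJ
      (continuousOn_pdx_one hJ (contDiffOn_pdx hJ hlamC))
      (pdx_periodic (pdx_periodic hlamper))
  obtain ⟨A1b, hA1b0, hA1b⟩ : ∃ M : ℝ, 0 ≤ M ∧ ∀ (θ : ℝ), ∀ s ∈ Icc (-ε) t, |pdx a θ s| ≤ M :=
    bound_of_periodic isCompact_Icc hIJ
      (continuousOn_pdx_one hJ (ha.of_le (by norm_num))) (pdx_periodic haper)
  -- the flow is continuous in time and solves the ODE with right derivatives
  have hϕcont : ∀ y : ℝ, ContinuousOn (fun s => ϕ y s) (Ico (-ε) T) :=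
    fun y s hs => (hϕode y s hs).continuousWithinAt
  have hODE' : ∀ y : ℝ, ∀ s ∈ Ico (-ε) t,
      HasDerivWithinAt (fun s' => ϕ y s') (lam (ϕ y s) s) (Ici s) s := by
    intro y s hs
    have hsJ : s ∈ Ico (-ε) T := ⟨hs.1, lt_trans hs.2 htT⟩
    refine (hϕode y s hsJ).mono_of_mem_nhdsWithin ?_
    have h1 : Iio T ∈ nhdsWithin s (Ici s) :=
      mem_nhdsWithin_of_mem_nhds (Iio_mem_nhds (lt_trans hs.2 htT))
    refine Filter.mem_of_superset (Filter.inter_mem self_mem_nhdsWithin h1) ?_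
    intro u hu
    exact ⟨le_trans hs.1 hu.1, hu.2⟩
  have hODEat : ∀ y : ℝ, ∀ s ∈ Ioo (-ε) T,
      HasDerivAt (fun s' => ϕ y s') (lam (ϕ y s) s) s := by
    intro y s hs
    exact (hϕode y s ⟨le_of_lt hs.1, hs.2⟩).hasDerivAt
      (mem_nhds_iff.mpr ⟨Ioo (-ε) T, Ioo_subset_Ico_self, isOpen_Ioo, hs⟩)
  -- Lipschitz estimate in the spatial variable (Gronwall)
  have hLip : ∀ y₁ y₂ : ℝ, ∀ s ∈ Icc (-ε) t,
      |ϕ y₁ s - ϕ y₂ s| ≤ |y₁ - y₂| * exp (Kb * (t + ε)) := by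
    intro y₁ y₂ s hs
    have hcont1 : ContinuousOn (fun s' => ϕ y₁ s' - ϕ y₂ s') (Icc (-ε) t) :=
      (((hϕcont y₁).mono hIJ).sub ((hϕcont y₂).mono hIJ))
    have hderiv : ∀ s' ∈ Ico (-ε) t,
        HasDerivWithinAt (fun s'' => ϕ y₁ s'' - ϕ y₂ s'')
          (lam (ϕ y₁ s') s' - lam (ϕ y₂ s') s') (Ici s') s' :=
      fun s' hs' => (hODE' y₁ s' hs').sub (hODE' y₂ s' hs')
    have hinit : ‖ϕ y₁ (-ε) - ϕ y₂ (-ε)‖ ≤ |y₁ - y₂| := by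
      rw [hϕ0, hϕ0, Real.norm_eq_abs]
    have hbnd : ∀ s' ∈ Ico (-ε) t,
        ‖lam (ϕ y₁ s') s' - lam (ϕ y₂ s') s'‖ ≤ Kb * ‖ϕ y₁ s' - ϕ y₂ s'‖ + 0 := by
      intro s' hs'
      have hs'J : s' ∈ Ico (-ε) T := ⟨hs'.1, lt_trans hs'.2 htT⟩
      have hs'I : s' ∈ Icc (-ε) t := ⟨hs'.1, le_of_lt hs'.2⟩
      have hlipW : LipschitzWith (Real.toNNReal Kb) (fun θ => lam θ s') := by
        apply lipschitzWith_of_nnnorm_deriv_le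
        · intro θ
          exact (hasDerivAt_pdx (hdW _ hlamC θ s' hs'J) hs'J).differentiableAt
        · intro θ
          have : deriv (fun θ' => lam θ' s') θ = pdx lam θ s' := rfl
          rw [this, ← NNReal.coe_le_coe]
          simpa [Real.norm_eq_abs, Real.coe_toNNReal _ hKb0] using hKb θ s' hs'I
      have := hlipW.dist_le_mul (ϕ y₁ s') (ϕ y₂ s')
      rw [Real.dist_eq, Real.dist_eq] at this
      simpa [Real.norm_eq_abs, Real.coe_toNNReal _ hKb0] using this
    have key := norm_le_gronwallBound_of_norm_deriv_right_le
      hcont1 hderiv hinit hbnd s hs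
    rw [gronwallBound_ε0] at key
    rw [Real.norm_eq_abs] at key
    calc |ϕ y₁ s - ϕ y₂ s| ≤ |y₁ - y₂| * exp (Kb * (s - -ε)) := key
      _ ≤ |y₁ - y₂| * exp (Kb * (t + ε)) := by
          apply mul_le_mul_of_nonneg_left _ (abs_nonneg _)
          apply exp_le_exp.mpr
          apply mul_le_mul_of_nonneg_left _ hKb0
          linarith [hs.2]
  -- uniform bound on the spatial derivative of the flow
  have hgB : ∀ y : ℝ, ∀ s ∈ Icc (-ε) t, |pdx ϕ y s| ≤ exp (Kb * (t + ε)) := by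
    intro y s hs
    have hsJ : s ∈ Ico (-ε) T := hIJ hs
    have hd : HasDerivAt (fun y' => ϕ y' s) (pdx ϕ y s) y :=
      (((hϕx s hsJ).differentiable (by norm_num)) y).hasDerivAt
    refine abs_deriv_le_of_lip (exp_nonneg _) hd ?_
    intro y'
    calc |ϕ y' s - ϕ y s| ≤ |y' - y| * exp (Kb * (t + ε)) := hLip y' y s hs
      _ = exp (Kb * (t + ε)) * |y' - y| := mul_comm _ _
  set B : ℝ := exp (Kb * (t + ε)) with hBdef
  have hB0 : (0:ℝ) < B := exp_pos _
  -- composite continuity along the flow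
  have hcurvecont : ∀ y : ℝ, ContinuousOn (fun s => ((ϕ y s : ℝ), s)) (Icc (-ε) t) :=
    fun y => ((hϕcont y).mono hIJ).prodMk continuousOn_id
  have hcompcont : ∀ (G : ℝ → ℝ → ℝ),
      ContinuousOn (fun p : ℝ × ℝ => G p.1 p.2) (univ ×ˢ Ico (-ε) T) →
      ∀ y : ℝ, ContinuousOn (fun s => G (ϕ y s) s) (Icc (-ε) t) := by
    intro G hG y
    exact hG.comp (hcurvecont y) (fun s hs => ⟨mem_univ _, hIJ hs⟩)
  have hlamxcont : ContinuousOn (fun p : ℝ × ℝ => pdx lam p.1 p.2) (univ ×ˢ Ico (-ε) T) :=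
    continuousOn_pdx_one hJ (hlamC.of_le (by norm_num))
  -- the flow satisfies the integral equation
  have hϕint : ∀ y : ℝ, ∀ s ∈ Icc (-ε) t, ϕ y s = y + ∫ σ in (-ε)..s, lam (ϕ y σ) σ := by
    intro y s hs
    have hsIcc : Icc (-ε) s ⊆ Icc (-ε) t := Icc_subset_Icc (le_refl _) hs.2
    have hcont : ContinuousOn (fun s' => ϕ y s') (Icc (-ε) s) :=
      (hϕcont y).mono (fun u hu => hIJ (hsIcc hu))
    have hderiv : ∀ σ ∈ Ioo (-ε) s, HasDerivWithinAt (fun s' => ϕ y s')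
        (lam (ϕ y σ) σ) (Ioi σ) σ := by
      intro σ hσ
      exact (hODEat y σ ⟨hσ.1, lt_of_lt_of_le hσ.2 (le_trans hs.2 (le_of_lt htT))⟩).hasDerivWithinAt
    have hint : IntervalIntegrable (fun σ => lam (ϕ y σ) σ) MeasureTheory.volume (-ε) s := by
      apply ContinuousOn.intervalIntegrable
      rw [uIcc_of_le hs.1]
      exact (hcompcont lam hlamC.continuousOn y).mono hsIcc
    have heq := intervalIntegral.integral_eq_sub_of_hasDeriv_right_of_le hs.1 hcont hderiv hint
    rw [hϕ0] at heq
    linarith [heq]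
  -- measurability of the spatial derivative in time
  have hgmeasIcc : ∀ y : ℝ, AEStronglyMeasurable (fun σ => pdx ϕ y σ)
      (MeasureTheory.volume.restrict (Icc (-ε) t)) := by
    intro y
    refine aestronglyMeasurable_of_tendsto_ae (f := fun (n : ℕ) (σ : ℝ) =>
      (ϕ (y + 1 / ((n : ℝ) + 1)) σ - ϕ y σ) * ((n : ℝ) + 1))
      (g := fun σ => pdx ϕ y σ) Filter.atTop ?_ ?_
    · intro n
      apply ContinuousOn.aestronglyMeasurable ?_ measurableSet_Icc
      exact ((((hϕcont _).mono hIJ)).sub (((hϕcont y)).mono hIJ)).mul continuousOn_const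
    · rw [MeasureTheory.ae_restrict_iff' measurableSet_Icc]
      refine MeasureTheory.ae_of_all _ (fun σ hσ => ?_)
      have hd : HasDerivAt (fun y' => ϕ y' σ) (pdx ϕ y σ) y :=
        (((hϕx σ (hIJ hσ)).differentiable (by norm_num)) y).hasDerivAt
      have hslope := hasDerivAt_iff_tendsto_slope.mp hd
      have hu : Filter.Tendsto (fun n : ℕ => y + 1 / ((n : ℝ) + 1)) Filter.atTop
          (nhdsWithin y {y}ᶜ) := by
        apply tendsto_nhdsWithin_of_tendsto_nhds_of_eventually_within
        · have := tendsto_one_div_add_atTop_nhds_zero_nat (𝕜 := ℝ)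
          have h2 := this.const_add y
          simpa using h2
        · refine Filter.Eventually.of_forall (fun n => ?_)
          have : (0:ℝ) < 1 / ((n : ℝ) + 1) := by positivity
          simp only [mem_compl_iff, mem_singleton_iff]
          intro hcontra
          nlinarith [hcontra]
      have hcomp := hslope.comp hu
      refine Filter.Tendsto.congr (fun n => ?_) hcomp
      show slope (fun y' => ϕ y' σ) y (y + 1 / ((n : ℝ) + 1)) = _
      rw [slope_def_field]
      have h1 : y + 1 / ((n : ℝ) + 1) - y = 1 / ((n : ℝ) + 1) := by ring
      rw [h1]
      have h2 : ((n : ℝ) + 1) ≠ 0 := by positivity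
      field_simp
  have hgmeas : ∀ y : ℝ, ∀ s ∈ Icc (-ε) t, AEStronglyMeasurable (fun σ => pdx ϕ y σ)
      (MeasureTheory.volume.restrict (Ι (-ε) s)) := by
    intro y s hs
    have hsub : Ι (-ε) s ⊆ Icc (-ε) t := by
      rw [uIoc_of_le hs.1]
      exact fun u hu => ⟨le_of_lt hu.1, le_trans hu.2 hs.2⟩
    exact (hgmeasIcc y).mono_measure (MeasureTheory.Measure.restrict_mono hsub (le_refl _))
  -- integral equation for the spatial derivative of the flow
  have hgint : ∀ y : ℝ, ∀ s ∈ Icc (-ε) t,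
      pdx ϕ y s = 1 + ∫ σ in (-ε)..s, pdx lam (ϕ y σ) σ * pdx ϕ y σ := by
    intro y s hs
    have hsubI : Ι (-ε) s ⊆ Icc (-ε) t := by
      rw [uIoc_of_le hs.1]
      exact fun u hu => ⟨le_of_lt hu.1, le_trans hu.2 hs.2⟩
    have hdom := intervalIntegral.hasDerivAt_integral_of_dominated_loc_of_deriv_le
      (μ := MeasureTheory.volume)
      (F := fun y' σ => lam (ϕ y' σ) σ)
      (F' := fun y' σ => pdx lam (ϕ y' σ) σ * pdx ϕ y' σ)
      (x₀ := y) (a := -ε) (b := s) (bound := fun _ => Kb * B) (s := Metric.ball y 1) (Metric.ball_mem_nhds y one_pos)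
      ?_ ?_ ?_ ?_ ?_ ?_
    · have h2 : HasDerivAt (fun y' => y' + ∫ σ in (-ε)..s, lam (ϕ y' σ) σ)
          (1 + ∫ σ in (-ε)..s, pdx lam (ϕ y σ) σ * pdx ϕ y σ) y :=
        (hasDerivAt_id y).add hdom.2
      have hfun : (fun y' => ϕ y' s) = fun y' => y' + ∫ σ in (-ε)..s, lam (ϕ y' σ) σ :=
        funext (fun y' => hϕint y' s hs)
      show deriv (fun y' => ϕ y' s) y = _
      rw [hfun]
      exact h2.deriv
    · refine Filter.Eventually.of_forall (fun y' => ?_)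
      refine ContinuousOn.aestronglyMeasurable ?_ measurableSet_uIoc
      exact ((hcompcont lam hlamC.continuousOn y').mono hsubI)
    · apply ContinuousOn.intervalIntegrable
      rw [uIcc_of_le hs.1]
      exact (hcompcont lam hlamC.continuousOn y).mono (Icc_subset_Icc (le_refl _) hs.2)
    · exact (((hcompcont (pdx lam) hlamxcont y).mono hsubI).aestronglyMeasurable
        measurableSet_uIoc).mul (hgmeas y s hs)
    · refine MeasureTheory.ae_of_all _ (fun σ hσ y' _ => ?_)
      have hσI : σ ∈ Icc (-ε) t := hsubI hσ
      rw [Real.norm_eq_abs, abs_mul]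
      have h1 := hKb (ϕ y' σ) σ hσI
      have h2 := hgB y' σ hσI
      exact mul_le_mul h1 h2 (abs_nonneg _) hKb0
    · exact intervalIntegrable_const
    · refine MeasureTheory.ae_of_all _ (fun σ hσ y' _ => ?_)
      have hσI : σ ∈ Icc (-ε) t := hsubI hσ
      have hσJ : σ ∈ Ico (-ε) T := hIJ hσI
      have houter : HasDerivAt (fun θ => lam θ σ) (pdx lam (ϕ y' σ) σ) (ϕ y' σ) :=
        hasDerivAt_pdx (hdW lam hlamC (ϕ y' σ) σ hσJ) hσJ
      have hinner : HasDerivAt (fun y'' => ϕ y'' σ) (pdx ϕ y' σ) y' :=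
        (((hϕx σ hσJ).differentiable (by norm_num)) y').hasDerivAt
      have := houter.comp y' hinner
      exact this
  -- continuity of the spatial derivative in time
  have hintg : ∀ y : ℝ, MeasureTheory.IntegrableOn
      (fun σ => pdx lam (ϕ y σ) σ * pdx ϕ y σ) (Icc (-ε) t) MeasureTheory.volume := by
    intro y
    refine MeasureTheory.Integrable.mono'
      (g := fun _ => Kb * B) (integrableOn_const measure_Icc_lt_top.ne)
      (((hcompcont (pdx lam) hlamxcont y).aestronglyMeasurable measurableSet_Icc).mul
        (hgmeasIcc y)) ?_
    rw [MeasureTheory.ae_restrict_iff' measurableSet_Icc]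
    refine MeasureTheory.ae_of_all _ (fun σ hσ => ?_)
    rw [Real.norm_eq_abs, abs_mul]
    exact mul_le_mul (hKb _ _ hσ) (hgB y σ hσ) (abs_nonneg _) hKb0
  have hgcont : ∀ y : ℝ, ContinuousOn (fun s' => pdx ϕ y s') (Icc (-ε) t) := by
    intro y
    have hprim : ContinuousOn
        (fun s' => ∫ σ in (-ε)..s', pdx lam (ϕ y σ) σ * pdx ϕ y σ) (Icc (-ε) t) := by
      have := intervalIntegral.continuousOn_primitive_interval
        (a := -ε) (b := t) (f := fun σ => pdx lam (ϕ y σ) σ * pdx ϕ y σ)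
        (by rw [uIcc_of_le hεt]; exact hintg y)
      rwa [uIcc_of_le hεt] at this
    exact (continuousOn_const.add hprim).congr (fun s' hs' => hgint y s' hs')
  -- fundamental theorem of calculus helper
  have hFTC : ∀ (G : ℝ → ℝ), ContinuousOn G (Icc (-ε) t) → ∀ s ∈ Ioo (-ε) t,
      HasDerivAt (fun r => ∫ σ in (-ε)..r, G σ) (G s) s := by
    intro G hG s hs
    have hIcc : Icc (-ε) t ∈ nhds s := Icc_mem_nhds hs.1 hs.2
    have hint : IntervalIntegrable G MeasureTheory.volume (-ε) s := by
      apply ContinuousOn.intervalIntegrable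
      rw [uIcc_of_le (le_of_lt hs.1)]
      exact hG.mono (Icc_subset_Icc (le_refl _) (le_of_lt hs.2))
    exact intervalIntegral.integral_hasDerivAt_right hint
      ⟨Icc (-ε) t, hIcc, hG.aestronglyMeasurable measurableSet_Icc⟩
      (hG.continuousAt hIcc)
  -- interior ODE for the spatial derivative of the flow
  have hgd : ∀ y : ℝ, ∀ r ∈ Ioo (-ε) t,
      HasDerivAt (fun r' => pdx ϕ y r') (pdx lam (ϕ y r) r * pdx ϕ y r) r := by
    intro y r hr
    have hGg : ContinuousOn (fun σ => pdx lam (ϕ y σ) σ * pdx ϕ y σ) (Icc (-ε) t) :=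
      (hcompcont (pdx lam) hlamxcont y).mul (hgcont y)
    have h1 : HasDerivAt (fun r' => 1 + ∫ σ in (-ε)..r', pdx lam (ϕ y σ) σ * pdx ϕ y σ)
        (pdx lam (ϕ y r) r * pdx ϕ y r) r := by
      have := (hFTC _ hGg r hr).const_add 1
      simpa using this
    refine HasDerivAt.congr_of_eventuallyEq h1 ?_
    filter_upwards [Icc_mem_nhds hr.1 hr.2] with u hu
    exact hgint y u hu
  have hg1 : ∀ y : ℝ, pdx ϕ y (-ε) = 1 := by
    intro y
    have hid : (fun y' => ϕ y' (-ε)) = fun y' => y' := funext hϕ0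
    show deriv (fun y' => ϕ y' (-ε)) y = 1
    rw [hid]
    exact deriv_id y
  -- exponential formula for the spatial derivative of the flow
  have hgexp : ∀ y : ℝ, ∀ s ∈ Icc (-ε) t,
      pdx ϕ y s = exp (∫ σ in (-ε)..s, pdx lam (ϕ y σ) σ) := by
    intro y s hs
    have hGcont : ContinuousOn (fun σ => pdx lam (ϕ y σ) σ) (Icc (-ε) t) :=
      hcompcont (pdx lam) hlamxcont y
    have hGintOn : MeasureTheory.IntegrableOn (fun σ => pdx lam (ϕ y σ) σ)
        (Icc (-ε) t) MeasureTheory.volume :=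
      hGcont.integrableOn_compact isCompact_Icc
    have hprimcont : ContinuousOn
        (fun s' => ∫ σ in (-ε)..s', pdx lam (ϕ y σ) σ) (Icc (-ε) t) := by
      have := intervalIntegral.continuousOn_primitive_interval
        (a := -ε) (b := t) (f := fun σ => pdx lam (ϕ y σ) σ)
        (by rw [uIcc_of_le hεt]; exact hGintOn)
      rwa [uIcc_of_le hεt] at this
    have hη : ∀ s' ∈ Icc (-ε) t,
        pdx ϕ y s' * exp (- ∫ σ in (-ε)..s', pdx lam (ϕ y σ) σ) = 1 := by
      intro s' hs'
      have hconst := const_of_hasDerivAt_zero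
        (f := fun r => pdx ϕ y r * exp (- ∫ σ in (-ε)..r, pdx lam (ϕ y σ) σ))
        (A := -ε) (b := t) ?_ ?_ s' hs'
      · simpa [hg1 y] using hconst
      · exact (hgcont y).mul (Real.continuous_exp.comp_continuousOn hprimcont.neg)
      · intro r hr
        have h1 := hgd y r hr
        have h2 : HasDerivAt (fun r' => exp (- ∫ σ in (-ε)..r', pdx lam (ϕ y σ) σ))
            (exp (- ∫ σ in (-ε)..r, pdx lam (ϕ y σ) σ) * (- pdx lam (ϕ y r) r)) r :=
          ((hFTC _ hGcont r hr).neg).exp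
        have h3 : HasDerivAt (fun r => pdx ϕ y r * exp (- ∫ σ in (-ε)..r, pdx lam (ϕ y σ) σ)) _ r :=
          h1.mul h2
        convert h3 using 1
        ring
    have h4 := hη s hs
    rw [Real.exp_neg] at h4
    have h5 : exp (∫ σ in (-ε)..s, pdx lam (ϕ y σ) σ) ≠ 0 := Real.exp_ne_zero _
    field_simp at h4
    exact h4
  have hgpos : ∀ y : ℝ, ∀ s ∈ Icc (-ε) t, 0 < pdx ϕ y s := by
    intro y s hs
    rw [hgexp y s hs]
    exact exp_pos _
  -- primitive continuity helper
  have hprimcont2 : ∀ (G : ℝ → ℝ), ContinuousOn G (Icc (-ε) t) →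
      ContinuousOn (fun s' => ∫ σ in (-ε)..s', G σ) (Icc (-ε) t) := by
    intro G hG
    have := intervalIntegral.continuousOn_primitive_interval (a := -ε) (b := t) (f := G)
      (by rw [uIcc_of_le hεt]; exact hG.integrableOn_compact (μ := MeasureTheory.volume) isCompact_Icc)
    rwa [uIcc_of_le hεt] at this
  -- second spatial derivative of the flow
  set P : ℝ → ℝ := fun s' => ∫ σ in (-ε)..s', pdx (pdx lam) (ϕ x σ) σ * pdx ϕ x σ with hPdef
  have hlamxxcont : ContinuousOn (fun p : ℝ × ℝ => pdx (pdx lam) p.1 p.2)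
      (univ ×ˢ Ico (-ε) T) := continuousOn_pdx_one hJ (contDiffOn_pdx hJ hlamC)
  have hPintcont : ContinuousOn (fun σ => pdx (pdx lam) (ϕ x σ) σ * pdx ϕ x σ)
      (Icc (-ε) t) := (hcompcont _ hlamxxcont x).mul (hgcont x)
  have hPcont : ContinuousOn P (Icc (-ε) t) := hprimcont2 _ hPintcont
  have hJxderiv : ∀ s ∈ Icc (-ε) t,
      HasDerivAt (fun y => ∫ σ in (-ε)..s, pdx lam (ϕ y σ) σ) (P s) x := by
    intro s hs
    have hsubI : Ι (-ε) s ⊆ Icc (-ε) t := by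
      rw [uIoc_of_le hs.1]
      exact fun u hu => ⟨le_of_lt hu.1, le_trans hu.2 hs.2⟩
    have hdom := intervalIntegral.hasDerivAt_integral_of_dominated_loc_of_deriv_le
      (μ := MeasureTheory.volume)
      (F := fun y' σ => pdx lam (ϕ y' σ) σ)
      (F' := fun y' σ => pdx (pdx lam) (ϕ y' σ) σ * pdx ϕ y' σ)
      (x₀ := x) (a := -ε) (b := s) (bound := fun _ => K2b * B) (s := Metric.ball x 1) (Metric.ball_mem_nhds x one_pos)
      ?_ ?_ ?_ ?_ ?_ ?_
    · exact hdom.2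
    · refine Filter.Eventually.of_forall (fun y' => ?_)
      exact ((hcompcont (pdx lam) hlamxcont y').mono hsubI).aestronglyMeasurable
        measurableSet_uIoc
    · apply ContinuousOn.intervalIntegrable
      rw [uIcc_of_le hs.1]
      exact (hcompcont (pdx lam) hlamxcont x).mono (Icc_subset_Icc (le_refl _) hs.2)
    · exact ((hPintcont.mono hsubI).aestronglyMeasurable measurableSet_uIoc)
    · refine MeasureTheory.ae_of_all _ (fun σ hσ y' _ => ?_)
      have hσI : σ ∈ Icc (-ε) t := hsubI hσ
      rw [Real.norm_eq_abs, abs_mul]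
      exact mul_le_mul (hK2b _ _ hσI) (hgB y' σ hσI) (abs_nonneg _) hK2b0
    · exact intervalIntegrable_const
    · refine MeasureTheory.ae_of_all _ (fun σ hσ y' _ => ?_)
      have hσJ : σ ∈ Ico (-ε) T := hIJ (hsubI hσ)
      have houter : HasDerivAt (fun θ => pdx lam θ σ) (pdx (pdx lam) (ϕ y' σ) σ) (ϕ y' σ) :=
        hasDerivAt_pdx (hdWPdx lam hlamC (ϕ y' σ) σ hσJ) hσJ
      have hinner : HasDerivAt (fun y'' => ϕ y'' σ) (pdx ϕ y' σ) y' :=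
        (((hϕx σ hσJ).differentiable (by norm_num)) y').hasDerivAt
      have := houter.comp y' hinner
      exact this
  have hϕxx : ∀ s ∈ Icc (-ε) t,
      pdx (fun y s' => pdx ϕ y s') x s = pdx ϕ x s * P s := by
    intro s hs
    have hfun : (fun y => pdx ϕ y s) = fun y => exp (∫ σ in (-ε)..s, pdx lam (ϕ y σ) σ) :=
      funext fun y => hgexp y s hs
    have hder : HasDerivAt (fun y => exp (∫ σ in (-ε)..s, pdx lam (ϕ y σ) σ))
        (exp (∫ σ in (-ε)..s, pdx lam (ϕ x σ) σ) * P s) x := (hJxderiv s hs).exp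
    show deriv (fun y => pdx ϕ y s) x = _
    rw [hfun, hder.deriv, ← hgexp x s hs]
  -- the function Φ along the fixed characteristic
  set Φt : ℝ → ℝ := fun s' => 2 * deriv (fun y => c y (-ε)) x / c x (-ε)
      - 16 / 3 * ∫ τ in (-ε)..s', pdx a (ϕ x τ) τ * pdx ϕ x τ with hΦtdef
  have hpda : ∀ y : ℝ, ∀ τ ∈ Icc (-ε) t,
      pdx (fun y' s' => a (ϕ y' s') s') y τ = pdx a (ϕ y τ) τ * pdx ϕ y τ := by
    intro y τ hτ
    have hτJ : τ ∈ Ico (-ε) T := hIJ hτ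
    have houter : HasDerivAt (fun θ => a θ τ) (pdx a (ϕ y τ) τ) (ϕ y τ) :=
      hasDerivAt_pdx (hdW a ha (ϕ y τ) τ hτJ) hτJ
    have hinner : HasDerivAt (fun y'' => ϕ y'' τ) (pdx ϕ y τ) y :=
      (((hϕx τ hτJ).differentiable (by norm_num)) y).hasDerivAt
    have hd : HasDerivAt (fun y'' => a (ϕ y'' τ) τ) (pdx a (ϕ y τ) τ * pdx ϕ y τ) y :=
      by have := houter.comp y hinner; exact this
    exact hd.deriv
  have haxcont : ContinuousOn (fun p : ℝ × ℝ => pdx a p.1 p.2) (univ ×ˢ Ico (-ε) T) :=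
    continuousOn_pdx_one hJ (ha.of_le (by norm_num))
  have hΦintc : ContinuousOn (fun τ => pdx a (ϕ x τ) τ * pdx ϕ x τ) (Icc (-ε) t) :=
    (hcompcont _ haxcont x).mul (hgcont x)
  have hΦΦt : ∀ s ∈ Icc (-ε) t, Φ x s = Φt s := by
    intro s hs
    rw [hΦ x s]
    have hcongr : (∫ τ in (-ε)..s, pdx (fun y s' => a (ϕ y s') s') x τ)
        = ∫ τ in (-ε)..s, pdx a (ϕ x τ) τ * pdx ϕ x τ := by
      apply intervalIntegral.integral_congr
      intro τ hτ
      rw [uIcc_of_le hs.1] at hτ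
      exact hpda x τ ⟨hτ.1, le_trans hτ.2 hs.2⟩
    rw [hcongr]
  have hΦtcont : ContinuousOn Φt (Icc (-ε) t) :=
    continuousOn_const.sub (continuousOn_const.mul (hprimcont2 _ hΦintc))
  have hΦtd : ∀ s ∈ Ioo (-ε) t,
      HasDerivAt Φt (-(16 / 3 * (pdx a (ϕ x s) s * pdx ϕ x s))) s := by
    intro s hs
    have h1 := HasDerivAt.const_mul (16/3 : ℝ) (hFTC _ hΦintc s hs)
    have h2 := h1.const_sub (2 * deriv (fun y => c y (-ε)) x / c x (-ε))
    exact h2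
  -- (i) the entropy is transported along the flow
  have hktrans : ∀ y : ℝ, ∀ s ∈ Icc (-ε) t, k (ϕ y s) s = k₀ y := by
    intro y s hs
    have hconst := const_of_hasDerivAt_zero (f := fun s' => k (ϕ y s') s') (A := -ε) (b := t)
      ?_ ?_ s hs
    · simpa [hϕ0, hk₀] using hconst
    · exact hk.continuousOn.comp (hcurvecont y) (fun s' hs' => ⟨mem_univ _, hIJ hs'⟩)
    · intro r hr
      have hrJ : r ∈ Ioo (-ε) T := hIooJ hr
      have hγ : HasDerivAt (fun s' => ϕ y s') (lam (ϕ y r) r) r := hODEat y r hrJ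
      have hchain := hasDerivAt_comp_curve (F := k) (hdiffAt k hkU (ϕ y r) r hrJ) hγ
      have heq := (heuler (ϕ y r) r ⟨le_of_lt hrJ.1, hrJ.2⟩).2.2.1
      have hval : lam (ϕ y r) r * pdx k (ϕ y r) r + pdt k (ϕ y r) r = 0 := by
        have hl : lam (ϕ y r) r = lam2 (w (ϕ y r) r) (z (ϕ y r) r) := rfl
        rw [hl]
        linarith [heq]
      rw [hval] at hchain
      exact hchain
  -- (ii) the first derivative identity
  have hkslice : ∀ (θ : ℝ), ∀ s ∈ Ico (-ε) T, HasDerivAt (fun θ' => k θ' s) (pdx k θ s) θ :=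
    fun θ s hs => hasDerivAt_pdx (hdW k hk θ s hs) hs
  have htI : t ∈ Icc (-ε) t := ⟨hεt, le_refl t⟩
  have hii : ∀ y : ℝ, pdx ϕ y t * pdx k (ϕ y t) t = deriv k₀ y := by
    intro y
    have hfun : k₀ = fun y' => k (ϕ y' t) t := funext fun y' => (hktrans y' t htI).symm
    have hinner : HasDerivAt (fun y' => ϕ y' t) (pdx ϕ y t) y :=
      (((hϕx t ht).differentiable (by norm_num)) y).hasDerivAt
    have hd : HasDerivAt (fun y' => k (ϕ y' t) t) (pdx k (ϕ y t) t * pdx ϕ y t) y :=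
      by have := (hkslice (ϕ y t) t ht).comp y hinner; exact this
    rw [hfun, hd.deriv]
    ring
  -- second derivative of the initial entropy
  have hgxd : HasDerivAt (fun y => pdx ϕ y t) (pdx (fun y s' => pdx ϕ y s') x t) x := by
    have h2 : ContDiff ℝ ((1 : WithTop ℕ∞) + 1) (fun y => ϕ y t) := by
      exact_mod_cast hϕx t ht
    have h1 : ContDiff ℝ 1 (deriv (fun y => ϕ y t)) := (contDiff_succ_iff_deriv.mp h2).2.2
    exact ((h1.differentiable one_ne_zero) x).hasDerivAt
  have hstar : iteratedDeriv 2 k₀ x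
      = pdx (fun y s' => pdx ϕ y s') x t * pdx k (ϕ x t) t
        + (pdx ϕ x t) ^ 2 * pdx (fun θ' t' => pdx k θ' t') (ϕ x t) t := by
    have hfun : deriv k₀ = fun y => pdx ϕ y t * pdx k (ϕ y t) t :=
      funext fun y => (hii y).symm
    have hinner : HasDerivAt (fun y' => ϕ y' t) (pdx ϕ x t) x :=
      (((hϕx t ht).differentiable (by norm_num)) x).hasDerivAt
    have houter2 : HasDerivAt (fun θ => pdx k θ t) (pdx (pdx k) (ϕ x t) t) (ϕ x t) :=
      hasDerivAt_pdx (hdWPdx k hk (ϕ x t) t ht) ht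
    have hd2 : HasDerivAt (fun y => pdx k (ϕ y t) t) (pdx (pdx k) (ϕ x t) t * pdx ϕ x t) x :=
      houter2.comp x hinner
    have hprod : HasDerivAt (fun y => pdx ϕ y t * pdx k (ϕ y t) t) _ x := hgxd.mul hd2
    have h2 : iteratedDeriv 2 k₀ = deriv (deriv k₀) := by
      rw [iteratedDeriv_succ, iteratedDeriv_one]
    rw [h2, hfun, hprod.deriv]
    ring
  -- spatial slice derivatives of the basic fields
  have hwslice : ∀ (θ : ℝ), ∀ s ∈ Ico (-ε) T, HasDerivAt (fun θ' => w θ' s) (pdx w θ s) θ :=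
    fun θ s hs => hasDerivAt_pdx (hdW w hw θ s hs) hs
  have hzslice : ∀ (θ : ℝ), ∀ s ∈ Ico (-ε) T, HasDerivAt (fun θ' => z θ' s) (pdx z θ s) θ :=
    fun θ s hs => hasDerivAt_pdx (hdW z hz θ s hs) hs
  have haslice : ∀ (θ : ℝ), ∀ s ∈ Ico (-ε) T, HasDerivAt (fun θ' => a θ' s) (pdx a θ s) θ :=
    fun θ s hs => hasDerivAt_pdx (hdW a ha θ s hs) hs
  have hcslice : ∀ (θ : ℝ), ∀ s ∈ Ico (-ε) T, HasDerivAt (fun θ' => c θ' s) (pdx c θ s) θ :=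
    fun θ s hs => hasDerivAt_pdx (hdW c hcC θ s hs) hs
  have hlamslice : ∀ (θ : ℝ), ∀ s ∈ Ico (-ε) T, HasDerivAt (fun θ' => lam θ' s) (pdx lam θ s) θ :=
    fun θ s hs => hasDerivAt_pdx (hdW lam hlamC θ s hs) hs
  have hpdxcslice : ∀ (θ : ℝ), ∀ s ∈ Ico (-ε) T,
      HasDerivAt (fun θ' => pdx c θ' s) (pdx (pdx c) θ s) θ :=
    fun θ s hs => hasDerivAt_pdx (hdWPdx c hcC θ s hs) hs
  have hpdxlamslice : ∀ (θ : ℝ), ∀ s ∈ Ico (-ε) T,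
      HasDerivAt (fun θ' => pdx lam θ' s) (pdx (pdx lam) θ s) θ :=
    fun θ s hs => hasDerivAt_pdx (hdWPdx lam hlamC θ s hs) hs
  -- linear relations between the derivatives
  have hcx_eq : ∀ (θ : ℝ), ∀ s ∈ Ico (-ε) T,
      pdx c θ s = (pdx w θ s - pdx z θ s) / 2 := by
    intro θ s hs
    have hfun : (fun θ' => c θ' s) = fun θ' => (w θ' s - z θ' s) / 2 :=
      funext fun θ' => hc θ' s
    have hd : HasDerivAt (fun θ' => (w θ' s - z θ' s) / 2)
        ((pdx w θ s - pdx z θ s) / 2) θ := ((hwslice θ s hs).sub (hzslice θ s hs)).div_const 2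
    show deriv (fun θ' => c θ' s) θ = _
    rw [hfun]
    exact hd.deriv
  have hlamx_eq : ∀ (θ : ℝ), ∀ s ∈ Ico (-ε) T,
      pdx lam θ s = 2 / 3 * (pdx w θ s + pdx z θ s) := by
    intro θ s hs
    have hd : HasDerivAt (fun θ' => 2 / 3 * (w θ' s + z θ' s))
        (2 / 3 * (pdx w θ s + pdx z θ s)) θ :=
      ((hwslice θ s hs).add (hzslice θ s hs)).const_mul (2/3)
    show deriv (fun θ' => lam θ' s) θ = _
    exact hd.deriv
  -- time derivative of c at interior points, via the Euler system
  have hE2 : ∀ (θ : ℝ), ∀ s ∈ Ioo (-ε) T,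
      pdt c θ s = -(lam θ s * pdx c θ s) - 8 / 3 * (a θ s * c θ s)
        - 1 / 2 * (c θ s * pdx lam θ s) := by
    intro θ s hs
    have hsJ : s ∈ Ico (-ε) T := ⟨le_of_lt hs.1, hs.2⟩
    have hwt : HasDerivAt (fun r => w θ r) (pdt w θ s) s := hasDerivAt_pdt' (hdiffAt w hwU θ s hs)
    have hzt : HasDerivAt (fun r => z θ r) (pdt z θ s) s := hasDerivAt_pdt' (hdiffAt z hzU θ s hs)
    have hct_eq : pdt c θ s = (pdt w θ s - pdt z θ s) / 2 := by
      have hfun : (fun r => c θ r) = fun r => (w θ r - z θ r) / 2 := funext fun r => hc θ r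
      have hd : HasDerivAt (fun r => (w θ r - z θ r) / 2) ((pdt w θ s - pdt z θ s) / 2) s :=
        (hwt.sub hzt).div_const 2
      show deriv (fun r => c θ r) s = _
      rw [hfun]
      exact hd.deriv
    have hEw := (heuler θ s hsJ).1
    have hEz := (heuler θ s hsJ).2.1
    simp only [lam1, lam2, lam3] at hEw hEz
    have hlamval : lam θ s = 2 / 3 * (w θ s + z θ s) := rfl
    rw [hct_eq, hlamval, hcx_eq θ s hsJ, hlamx_eq θ s hsJ, hc θ s]
    linear_combination hEw / 2 - hEz / 2
  -- joint continuity of the q-factor along the characteristic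
  have hqfcont : ContinuousOn (fun s' => (c (ϕ x s') s')⁻¹ * pdx c (ϕ x s') s') (Icc (-ε) t) := by
    have hjoint : ContinuousOn (fun p : ℝ × ℝ => (c p.1 p.2)⁻¹ * pdx c p.1 p.2)
        (univ ×ˢ Ico (-ε) T) :=
      (hcC.continuousOn.inv₀ (fun p hp => (hcpos p.1 p.2 hp.2).ne')).mul
        (continuousOn_pdx_one hJ (hcC.of_le (by norm_num)))
    exact hcompcont (fun θ s => (c θ s)⁻¹ * pdx c θ s) hjoint x
  set D : ℝ → ℝ := fun s' => P s' - Φt s'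
      + 2 * pdx ϕ x s' * ((c (ϕ x s') s')⁻¹ * pdx c (ϕ x s') s') with hDdef
  have hDcont : ContinuousOn D (Icc (-ε) t) :=
    (hPcont.sub hΦtcont).add ((continuousOn_const.mul (hgcont x)).mul hqfcont)
  have hD0 : D (-ε) = 0 := by
    have hcne : c x (-ε) ≠ 0 := (hcpos x (-ε) hεJ).ne'
    show P (-ε) - Φt (-ε)
        + 2 * pdx ϕ x (-ε) * ((c (ϕ x (-ε)) (-ε))⁻¹ * pdx c (ϕ x (-ε)) (-ε)) = 0
    rw [hg1 x, hϕ0 x]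
    have hP0 : P (-ε) = 0 := intervalIntegral.integral_same
    have hΦt0 : Φt (-ε) = 2 * deriv (fun y => c y (-ε)) x / c x (-ε) := by
      show _ - 16 / 3 * ∫ τ in (-ε)..(-ε), _ = _
      rw [intervalIntegral.integral_same]
      ring
    rw [hP0, hΦt0]
    have hder : deriv (fun y => c y (-ε)) x = pdx c x (-ε) := rfl
    rw [hder]
    field_simp
    ring
  have hDder : ∀ s ∈ Ioo (-ε) t, HasDerivAt D 0 s := by
    intro s hs
    have hsT : s ∈ Ioo (-ε) T := hIooJ hs
    have hsJ : s ∈ Ico (-ε) T := ⟨le_of_lt hsT.1, hsT.2⟩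
    set θ₀ : ℝ := ϕ x s with hθ₀
    have hcvne : c θ₀ s ≠ 0 := (hcpos θ₀ s hsJ).ne'
    have hγ : HasDerivAt (fun s' => ϕ x s') (lam θ₀ s) s := hODEat x s hsT
    have hcomp_c : HasDerivAt (fun s' => c (ϕ x s') s')
        (lam θ₀ s * pdx c θ₀ s + pdt c θ₀ s) s :=
      hasDerivAt_comp_curve (hdiffAt c hcU θ₀ s hsT) hγ
    have hcomp_cx : HasDerivAt (fun s' => pdx c (ϕ x s') s')
        (lam θ₀ s * pdx (pdx c) θ₀ s + pdt (pdx c) θ₀ s) s :=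
      hasDerivAt_comp_curve (F := pdx c) (hdiffAtPdx c hcU θ₀ s hsT) hγ
    have hinv : HasDerivAt (fun s' => (c (ϕ x s') s')⁻¹)
        (-(lam θ₀ s * pdx c θ₀ s + pdt c θ₀ s) / c θ₀ s ^ 2) s := hcomp_c.inv hcvne
    have hq' := hinv.mul hcomp_cx
    have hgd' := hgd x s hs
    have h2g : HasDerivAt (fun s' => 2 * pdx ϕ x s') (2 * (pdx lam θ₀ s * pdx ϕ x s)) s :=
      hgd'.const_mul 2
    have hprod := h2g.mul hq'
    have hP' : HasDerivAt P (pdx (pdx lam) θ₀ s * pdx ϕ x s) s := hFTC _ hPintcont s hs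
    have hΦ' := hΦtd s hs
    have htot := (hP'.sub hΦ').add hprod
    have hctx1 : HasDerivAt (fun y => pdt c y s) (pdt (pdx c) θ₀ s) θ₀ := by
      have h := schwarz_slice hcU hsT (θ := θ₀)
      have h2 : pdt (pdx c) θ₀ s
          = fderiv ℝ (fun p : ℝ × ℝ => pdx c p.1 p.2) (θ₀, s) (0, 1) :=
        (hasDerivAt_slice_t' (hdiffAtPdx c hcU θ₀ s hsT)).deriv
      rw [h2]
      exact h
    have hR : HasDerivAt (fun y => -(lam y s * pdx c y s) - 8 / 3 * (a y s * c y s)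
          - 1 / 2 * (c y s * pdx lam y s))
        (-(pdx lam θ₀ s * pdx c θ₀ s + lam θ₀ s * pdx (pdx c) θ₀ s)
          - 8 / 3 * (pdx a θ₀ s * c θ₀ s + a θ₀ s * pdx c θ₀ s)
          - 1 / 2 * (pdx c θ₀ s * pdx lam θ₀ s + c θ₀ s * pdx (pdx lam) θ₀ s)) θ₀ := by
      have h1 := ((hlamslice θ₀ s hsJ).mul (hpdxcslice θ₀ s hsJ)).neg
      have h2 := ((haslice θ₀ s hsJ).mul (hcslice θ₀ s hsJ)).const_mul (8/3 : ℝ)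
      have h3 := ((hcslice θ₀ s hsJ).mul (hpdxlamslice θ₀ s hsJ)).const_mul (1/2 : ℝ)
      exact (h1.sub h2).sub h3
    have hfunR : (fun y => pdt c y s) = fun y => -(lam y s * pdx c y s)
        - 8 / 3 * (a y s * c y s) - 1 / 2 * (c y s * pdx lam y s) :=
      funext fun y => hE2 y s hsT
    have hctxval : pdt (pdx c) θ₀ s
        = -(pdx lam θ₀ s * pdx c θ₀ s + lam θ₀ s * pdx (pdx c) θ₀ s)
          - 8 / 3 * (pdx a θ₀ s * c θ₀ s + a θ₀ s * pdx c θ₀ s)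
          - 1 / 2 * (pdx c θ₀ s * pdx lam θ₀ s + c θ₀ s * pdx (pdx lam) θ₀ s) := by
      have h := hctx1
      rw [hfunR] at h
      exact h.unique hR
    have hctval := hE2 θ₀ s hsT
    have hfinal : HasDerivAt D
        (pdx (pdx lam) θ₀ s * pdx ϕ x s - -(16 / 3 * (pdx a θ₀ s * pdx ϕ x s))
          + (2 * (pdx lam θ₀ s * pdx ϕ x s) * ((c θ₀ s)⁻¹ * pdx c θ₀ s)
            + 2 * pdx ϕ x s
              * (-(lam θ₀ s * pdx c θ₀ s + pdt c θ₀ s) / c θ₀ s ^ 2 * pdx c θ₀ s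
                + (c θ₀ s)⁻¹ * (lam θ₀ s * pdx (pdx c) θ₀ s + pdt (pdx c) θ₀ s)))) s := htot
    have hzero : pdx (pdx lam) θ₀ s * pdx ϕ x s - -(16 / 3 * (pdx a θ₀ s * pdx ϕ x s))
          + (2 * (pdx lam θ₀ s * pdx ϕ x s) * ((c θ₀ s)⁻¹ * pdx c θ₀ s)
            + 2 * pdx ϕ x s
              * (-(lam θ₀ s * pdx c θ₀ s + pdt c θ₀ s) / c θ₀ s ^ 2 * pdx c θ₀ s
                + (c θ₀ s)⁻¹ * (lam θ₀ s * pdx (pdx c) θ₀ s + pdt (pdx c) θ₀ s))) = 0 := by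
      rw [hctxval, hctval]
      field_simp
      ring
    rw [hzero] at hfinal
    exact hfinal
  have hDzero : ∀ s ∈ Icc (-ε) t, D s = 0 := by
    intro s hs
    have h := const_of_hasDerivAt_zero hDcont hDder s hs
    rw [h, hD0]
  -- (iii)
  have hiii : pdx (fun y s' => pdx ϕ y s') x t
      = pdx ϕ x t * Φ x t
        - 2 * (pdx ϕ x t) ^ 2 * ((c (ϕ x t) t)⁻¹ * pdx c (ϕ x t) t) := by
    have hDt : P t - Φt t
        + 2 * pdx ϕ x t * ((c (ϕ x t) t)⁻¹ * pdx c (ϕ x t) t) = 0 := hDzero t htI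
    have hxx := hϕxx t htI
    rw [hΦΦt t htI, hxx]
    have hPt : P t = Φt t - 2 * pdx ϕ x t * ((c (ϕ x t) t)⁻¹ * pdx c (ϕ x t) t) := by
      linarith
    rw [hPt]
    ring
  refine ⟨hktrans x t htI, hii x, hiii, ?_, ?_⟩
  · rw [hstar, ← hii x, hiii]
    ring
  · have hgne : pdx ϕ x t ≠ 0 := (hgpos x t htI).ne'
    have hcne : c (ϕ x t) t ≠ 0 := (hcpos (ϕ x t) t ht).ne'
    rw [hE, hstar, ← hii x, hiii]
    field_simp
    ring
end
end
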